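/- arXiv:1201.3239 — 3 statements merged into one kernel-verified Lean document; each statement's English description precedes it below -/
import Mathlib

section
/- The tail bound: for r > 0, d ≥ 1, real vectors x, y ∈ ℝ^{d+1}, and N ∈ ℕ sufficiently large so that r²·∑_{i=1}^{d+1}(|x_i| + y_i²) < N+1, the absolute value of the tail ∑_{|α+β| ≥ N} r^{d+2|α+β|} ((d−1)!!·∏(2α_i+2β_i−1)!!)/((d−1+2|α|+2|β|)!!·α!·(2β)!) x^α y^{2β} is at most (r^d/N!)·L^N·(N+1)/(N+1−L), where L = r²·∑_{i=1}^{d+1}(|x_i| + y_i²). -/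
open scoped Nat BigOperators ENNReal NNReal

lemma dfact_le_dfact_succ : ∀ n : ℕ, n‼ ≤ (n+1)‼
  | 0 => le_refl _
  | 1 => by simp [Nat.doubleFactorial]
  | (n+2) => by
      show (n+2)‼ ≤ (n+1+2)‼
      rw [Nat.doubleFactorial_add_two, Nat.doubleFactorial_add_two]
      exact Nat.mul_le_mul (by omega) (dfact_le_dfact_succ n)

lemma dfact_pred_le (m : ℕ) : (2*m - 1)‼ ≤ (2*m)‼ := by
  cases m with
  | zero => simp
  | succ m =>
      have h := dfact_le_dfact_succ (2*(m+1)-1)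
      have h2 : 2*(m+1)-1+1 = 2*(m+1) := by omega
      rwa [h2] at h

lemma dfact_pow_le (d n : ℕ) (hd : 1 ≤ d) : (d-1)‼ * (2^n * n !) ≤ (d-1+2*n)‼ := by
  induction n with
  | zero => simp
  | succ n ih =>
    have h : d-1+2*(n+1) = (d-1+2*n)+2 := by omega
    rw [h, Nat.doubleFactorial_add_two]
    calc (d-1)‼ * (2^(n+1) * (n+1)!)
        = ((d-1)‼ * (2^n * n !)) * (2*(n+1)) := by
          rw [pow_succ, Nat.factorial_succ]; ring
      _ ≤ (d-1+2*n)‼ * (2*(n+1)) := Nat.mul_le_mul_right _ ih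
      _ ≤ (d-1+2*n)‼ * ((d-1+2*n)+2) := Nat.mul_le_mul_left _ (by omega)
      _ = ((d-1+2*n)+2) * (d-1+2*n)‼ := by ring

lemma nat_coeff_le {ι : Type*} [Fintype ι] (d : ℕ) (hd : 1 ≤ d) (a b : ι → ℕ) :
    (d-1)‼ * (∏ i, (2*a i + 2*b i - 1)‼) * ∏ i, (b i)! ≤
    (d-1+2*((∑ i, a i)+(∑ i, b i)))‼ * ∏ i, (2*b i)! := by
  set n := (∑ i, a i)+(∑ i, b i) with hn
  have h1 : (∏ i, (2*a i + 2*b i - 1)‼) ≤ 2^n * n ! := by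
    calc ∏ i, (2*a i + 2*b i - 1)‼
        ≤ ∏ i, (2*(a i + b i))‼ := by
          apply Finset.prod_le_prod'
          intro i _
          have := dfact_pred_le (a i + b i)
          have h2 : 2*a i + 2*b i = 2*(a i + b i) := by omega
          rwa [h2]
      _ = ∏ i, (2^(a i + b i) * (a i + b i)!) := by
          simp [Nat.doubleFactorial_two_mul]
      _ = 2^n * ∏ i, (a i + b i)! := by
          rw [Finset.prod_mul_distrib, Finset.prod_pow_eq_pow_sum, hn,
            Finset.sum_add_distrib]
      _ ≤ 2^n * n ! := by
          apply Nat.mul_le_mul_left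
          have hd : (∏ i, (a i + b i)!) ∣ (∑ i, (a i + b i))! :=
            Nat.prod_factorial_dvd_factorial_sum _ _
          have : (∑ i, (a i + b i)) = n := by rw [hn, Finset.sum_add_distrib]
          rw [this] at hd
          exact Nat.le_of_dvd n.factorial_pos hd
  calc (d-1)‼ * (∏ i, (2*a i + 2*b i - 1)‼) * ∏ i, (b i)!
      ≤ (d-1)‼ * (2^n * n !) * ∏ i, (2*b i)! := by
        apply Nat.mul_le_mul (Nat.mul_le_mul_left _ h1)
        exact Finset.prod_le_prod' fun i _ => Nat.factorial_le (by omega)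
    _ ≤ (d-1+2*n)‼ * ∏ i, (2*b i)! :=
        Nat.mul_le_mul_right _ (dfact_pow_le d n hd)

lemma multinomial_div {ι : Type*} [Fintype ι] [DecidableEq ι] (c : ι → ℝ) (n : ℕ) :
    ∑ k ∈ Finset.piAntidiag Finset.univ n, ∏ i, c i ^ k i / (k i)! = (∑ i, c i) ^ n / n ! := by
  rw [Finset.sum_pow_eq_sum_piAntidiag, Finset.sum_div]
  apply Finset.sum_congr rfl
  intro k hk
  have hsum : ∑ i, k i = n := (Finset.mem_piAntidiag.1 hk).1
  have hspec := Nat.multinomial_spec Finset.univ k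
  rw [hsum] at hspec
  have hfac : (n ! : ℝ) = (∏ i, ((k i)! : ℝ)) * (Nat.multinomial Finset.univ k : ℝ) := by
    exact_mod_cast congrArg (Nat.cast (R := ℝ)) hspec.symm
  have h1 : (∏ i, ((k i)! : ℝ)) ≠ 0 :=
    Finset.prod_ne_zero_iff.2 fun i _ => Nat.cast_ne_zero.2 (k i).factorial_ne_zero
  have h2 : (n ! : ℝ) ≠ 0 := Nat.cast_ne_zero.2 n.factorial_ne_zero
  rw [Finset.prod_div_distrib, div_eq_div_iff h1 h2, hfac]
  ring

lemma exp_tail_bound (L : ℝ) (N : ℕ) (h0 : 0 ≤ L) (h1 : L < N + 1) :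
    ∑' n : ℕ, (if N ≤ n then L ^ n / n ! else 0) ≤ L ^ N / N ! * ((N+1)/(N+1-L)) := by
  set q : ℝ := L / (N+1) with hq
  have hN1 : (0:ℝ) < N + 1 := by positivity
  have hq0 : 0 ≤ q := by positivity
  have hq1 : q < 1 := by
    rw [hq, div_lt_one hN1]; exact h1
  have hsum : Summable (fun n : ℕ => if N ≤ n then L ^ n / n ! else 0) := by
    apply Summable.of_nonneg_of_le (fun n => by positivity)
      (fun n => ?_) (Real.summable_pow_div_factorial L)
    split
    · exact le_refl _
    · positivity
  rw [← hsum.sum_add_tsum_nat_add N]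
  have hz : (∑ i ∈ Finset.range N, if N ≤ i then L ^ i / i ! else 0) = 0 := by
    apply Finset.sum_eq_zero
    intro i hi
    rw [if_neg]
    exact Nat.not_le.2 (Finset.mem_range.1 hi)
  rw [hz, zero_add]
  have hgsum : Summable (fun i : ℕ => L ^ N / N ! * q ^ i) :=
    (summable_geometric_of_lt_one hq0 hq1).mul_left _
  have hle : ∀ i : ℕ, (if N ≤ i + N then L ^ (i+N) / (i+N)! else 0) ≤ L ^ N / N ! * q ^ i := by
    intro i
    rw [if_pos (Nat.le_add_left _ _)]
    have hfact : (N ! : ℝ) * (N+1) ^ i ≤ ((i+N)! : ℝ) := by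
      have := @Nat.factorial_mul_pow_le_factorial N i
      have h2 : N + i = i + N := by omega
      rw [h2] at this
      exact_mod_cast this
    calc L ^ (i+N) / ((i+N)! : ℝ)
        ≤ L ^ (i+N) / ((N ! : ℝ) * (N+1) ^ i) := by
          apply div_le_div_of_nonneg_left (by positivity) (by positivity) hfact
      _ = L ^ N / N ! * q ^ i := by
          rw [hq, pow_add, div_pow]
          field_simp
  calc ∑' i : ℕ, (if N ≤ i + N then L ^ (i+N) / (i+N)! else 0)
      ≤ ∑' i : ℕ, L ^ N / N ! * q ^ i :=
        Summable.tsum_le_tsum hle (hsum.comp_injective (add_left_injective N)) hgsum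
    _ = L ^ N / N ! * (1 - q)⁻¹ := by
        rw [tsum_mul_left, tsum_geometric_of_lt_one hq0 hq1]
    _ = L ^ N / N ! * ((N+1)/(N+1-L)) := by
        have : 1 - q = (N+1-L)/(N+1) := by
          rw [hq]; field_simp
        rw [this, inv_div]

lemma abs_tsum_le_of_ennreal {α : Type*} (f : α → ℝ) (C : ℝ) (hC : 0 ≤ C)
    (h : ∑' p, (‖f p‖₊ : ℝ≥0∞) ≤ ENNReal.ofReal C) : |∑' p, f p| ≤ C := by
  have hne : (∑' p, (‖f p‖₊ : ℝ≥0∞)) ≠ ⊤ := ne_top_of_le_ne_top ENNReal.ofReal_ne_top h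
  have hnn : Summable fun p => ‖f p‖₊ := ENNReal.tsum_coe_ne_top_iff_summable.1 hne
  have hnorm : Summable fun p => ‖f p‖ := by
    simpa only [coe_nnnorm] using NNReal.summable_coe.2 hnn
  have h1 : |∑' p, f p| ≤ ∑' p, ‖f p‖ := by
    rw [← Real.norm_eq_abs]; exact norm_tsum_le_tsum_norm hnorm
  have h2 : ENNReal.ofReal (∑' p, ‖f p‖) = ∑' p, (‖f p‖₊ : ℝ≥0∞) := by
    rw [ENNReal.ofReal_tsum_of_nonneg (fun p => norm_nonneg _) hnorm]
    simp_rw [ofReal_norm, enorm_eq_nnnorm]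
  have h3 : ∑' p, ‖f p‖ ≤ C := by
    rw [← ENNReal.ofReal_le_ofReal_iff hC, h2]; exact h
  exact h1.trans h3

set_option maxHeartbeats 2000000 in
theorem fisher_bingham_series_tail_bound (d : ℕ) (hd : 1 ≤ d) (r : ℝ) (hr : 0 < r)
    (x y : Fin (d + 1) → ℝ) (N : ℕ)
    (hL : r ^ 2 * ∑ i, (|x i| + y i ^ 2) < N + 1) :
    |∑' p : (Fin (d + 1) → ℕ) × (Fin (d + 1) → ℕ),
        if N ≤ (∑ i, p.1 i) + (∑ i, p.2 i) then
          r ^ (d + 2 * ((∑ i, p.1 i) + (∑ i, p.2 i))) *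
            (((Nat.doubleFactorial (d - 1) : ℝ) *
                  ∏ i, (Nat.doubleFactorial (2 * p.1 i + 2 * p.2 i - 1) : ℝ)) /
              ((Nat.doubleFactorial (d - 1 + 2 * (∑ i, p.1 i) + 2 * (∑ i, p.2 i)) : ℝ) *
                (∏ i, (Nat.factorial (p.1 i) : ℝ)) *
                ∏ i, (Nat.factorial (2 * p.2 i) : ℝ))) *
            (∏ i, x i ^ p.1 i) * ∏ i, y i ^ (2 * p.2 i)
        else 0| ≤
      r ^ d / (Nat.factorial N : ℝ) * (r ^ 2 * ∑ i, (|x i| + y i ^ 2)) ^ N *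
        ((N + 1) / (N + 1 - r ^ 2 * ∑ i, (|x i| + y i ^ 2))) := by
  classical
  set S := ∑ i, (|x i| + y i ^ 2) with hSdef
  have hS0 : 0 ≤ S := Finset.sum_nonneg fun i _ => by positivity
  have hL0 : (0:ℝ) ≤ r ^ 2 * S := by positivity
  have hNL : (0:ℝ) < N + 1 - r ^ 2 * S := by linarith
  have hRHS0 : 0 ≤ r ^ d / (N ! : ℝ) * (r ^ 2 * S) ^ N * ((N + 1) / (N + 1 - r ^ 2 * S)) := by
    apply mul_nonneg (mul_nonneg (by positivity) (by positivity))
    exact div_nonneg (by positivity) hNL.le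
  refine abs_tsum_le_of_ennreal _ _ hRHS0 ?_
  -- auxiliary definitions
  set g : (Fin (d + 1) → ℕ) × (Fin (d + 1) → ℕ) → ℝ := fun p =>
    if N ≤ (∑ i, p.1 i) + (∑ i, p.2 i) then
      r ^ (d + 2 * ((∑ i, p.1 i) + (∑ i, p.2 i))) *
        (∏ i, |x i| ^ p.1 i / ((p.1 i)! : ℝ)) * ∏ i, (y i ^ 2) ^ p.2 i / ((p.2 i)! : ℝ)
    else 0 with hgdef
  set c : (Fin (d + 1) ⊕ Fin (d + 1)) → ℝ :=
    Sum.elim (fun i => |x i|) (fun i => y i ^ 2) with hcdef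
  have hc0 : ∀ j, 0 ≤ c j := by
    intro j
    cases j <;> simp [hcdef] <;> positivity
  have hcS : ∑ j, c j = S := by
    rw [Fintype.sum_sum_type, hSdef, Finset.sum_add_distrib]
    simp [hcdef]
  set e := Equiv.sumArrowEquivProdArrow (Fin (d+1)) (Fin (d+1)) ℕ with hedef
  set G : (Fin (d + 1) ⊕ Fin (d + 1) → ℕ) → ℝ := fun k =>
    if N ≤ ∑ j, k j then r ^ (d + 2 * ∑ j, k j) * ∏ j, c j ^ k j / ((k j)! : ℝ) else 0
    with hGdef
  have hge : ∀ k, g (e k) = G k := by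
    intro k
    have hw : (∑ i, (e k).1 i) + (∑ i, (e k).2 i) = ∑ j, k j := by
      rw [Fintype.sum_sum_type]; rfl
    have hp : (∏ i, |x i| ^ (e k).1 i / (((e k).1 i)! : ℝ)) *
        ∏ i, (y i ^ 2) ^ (e k).2 i / (((e k).2 i)! : ℝ) = ∏ j, c j ^ k j / ((k j)! : ℝ) := by
      rw [Fintype.prod_sum_type]; rfl
    rw [hgdef, hGdef]
    simp only []
    rw [hw, ← hp, mul_assoc]
  set t : ℕ → ℝ := fun n => r ^ d * (if N ≤ n then (r ^ 2 * S) ^ n / n ! else 0) with htdef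
  have ht0 : ∀ n, 0 ≤ t n := by
    intro n
    rw [htdef]
    apply mul_nonneg (by positivity)
    split
    · positivity
    · exact le_refl 0
  have hsum_ite : Summable (fun n : ℕ => if N ≤ n then (r ^ 2 * S) ^ n / n ! else 0) := by
    apply Summable.of_nonneg_of_le (fun n => by positivity)
      (fun n => ?_) (Real.summable_pow_div_factorial (r ^ 2 * S))
    split
    · exact le_refl _
    · positivity
  have hsum_t : Summable t := by
    rw [htdef]; exact hsum_ite.mul_left _
  have hfg : ∀ p : (Fin (d + 1) → ℕ) × (Fin (d + 1) → ℕ),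
      |if N ≤ (∑ i, p.1 i) + (∑ i, p.2 i) then
          r ^ (d + 2 * ((∑ i, p.1 i) + (∑ i, p.2 i))) *
            (((Nat.doubleFactorial (d - 1) : ℝ) *
                  ∏ i, (Nat.doubleFactorial (2 * p.1 i + 2 * p.2 i - 1) : ℝ)) /
              ((Nat.doubleFactorial (d - 1 + 2 * (∑ i, p.1 i) + 2 * (∑ i, p.2 i)) : ℝ) *
                (∏ i, (Nat.factorial (p.1 i) : ℝ)) *
                ∏ i, (Nat.factorial (2 * p.2 i) : ℝ))) *
            (∏ i, x i ^ p.1 i) * ∏ i, y i ^ (2 * p.2 i)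
        else 0| ≤ g p := by
    intro p
    rw [hgdef]
    simp only []
    by_cases hN : N ≤ (∑ i, p.1 i) + (∑ i, p.2 i)
    · rw [if_pos hN, if_pos hN]
      have hCa : (0:ℝ) < ∏ i, ((p.1 i)! : ℝ) :=
        Finset.prod_pos fun i _ => by exact_mod_cast (p.1 i).factorial_pos
      have hCb : (0:ℝ) < ∏ i, ((p.2 i)! : ℝ) :=
        Finset.prod_pos fun i _ => by exact_mod_cast (p.2 i).factorial_pos
      have hB : (0:ℝ) < ((d - 1 + 2 * (∑ i, p.1 i) + 2 * (∑ i, p.2 i))‼ : ℝ) *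
          (∏ i, ((p.1 i)! : ℝ)) * ∏ i, ((2 * p.2 i)! : ℝ) := by
        refine mul_pos (mul_pos ?_ hCa) ?_
        · exact_mod_cast Nat.doubleFactorial_pos _
        · exact Finset.prod_pos fun i _ => by exact_mod_cast (2 * p.2 i).factorial_pos
      have hA0 : (0:ℝ) ≤ ((d-1)‼ : ℝ) * ∏ i, ((2 * p.1 i + 2 * p.2 i - 1)‼ : ℝ) := by
        apply mul_nonneg (Nat.cast_nonneg _)
        exact Finset.prod_nonneg fun i _ => Nat.cast_nonneg _
      have hY0 : (0:ℝ) ≤ ∏ i, y i ^ (2 * p.2 i) :=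
        Finset.prod_nonneg fun i _ => by rw [pow_mul]; positivity
      have hXabs : |∏ i, x i ^ p.1 i| = ∏ i, |x i| ^ p.1 i := by
        rw [Finset.abs_prod]
        exact Finset.prod_congr rfl fun i _ => abs_pow _ _
      have hdiv : (((d-1)‼ : ℝ) * ∏ i, ((2 * p.1 i + 2 * p.2 i - 1)‼ : ℝ)) /
          (((d - 1 + 2 * (∑ i, p.1 i) + 2 * (∑ i, p.2 i))‼ : ℝ) *
            (∏ i, ((p.1 i)! : ℝ)) * ∏ i, ((2 * p.2 i)! : ℝ)) ≤
          1 / ((∏ i, ((p.1 i)! : ℝ)) * ∏ i, ((p.2 i)! : ℝ)) := by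
        rw [div_le_div_iff₀ hB (by positivity), one_mul]
        have hnat := Nat.mul_le_mul_right (∏ i, (p.1 i)!) (nat_coeff_le d hd p.1 p.2)
        calc (((d-1)‼ : ℝ) * ∏ i, ((2 * p.1 i + 2 * p.2 i - 1)‼ : ℝ)) *
              ((∏ i, ((p.1 i)! : ℝ)) * ∏ i, ((p.2 i)! : ℝ))
            = ((((d-1)‼ * (∏ i, (2 * p.1 i + 2 * p.2 i - 1)‼) * ∏ i, (p.2 i)!) *
                ∏ i, (p.1 i)! : ℕ) : ℝ) := by push_cast; ring
          _ ≤ ((((d-1+2*((∑ i, p.1 i)+(∑ i, p.2 i)))‼ * ∏ i, (2 * p.2 i)!) *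
                ∏ i, (p.1 i)! : ℕ) : ℝ) := Nat.cast_le.2 hnat
          _ = ((d - 1 + 2 * (∑ i, p.1 i) + 2 * (∑ i, p.2 i))‼ : ℝ) *
              (∏ i, ((p.1 i)! : ℝ)) * ∏ i, ((2 * p.2 i)! : ℝ) := by
            rw [show d - 1 + 2 * ((∑ i, p.1 i)+(∑ i, p.2 i)) =
              d - 1 + 2 * (∑ i, p.1 i) + 2 * (∑ i, p.2 i) from by omega]
            push_cast; ring
      have hCa0 : (∏ i, ((p.1 i)! : ℝ)) ≠ 0 := hCa.ne'
      have hCb0 : (∏ i, ((p.2 i)! : ℝ)) ≠ 0 := hCb.ne'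
      calc |r ^ (d + 2 * ((∑ i, p.1 i) + (∑ i, p.2 i))) *
            ((((d-1)‼ : ℝ) * ∏ i, ((2 * p.1 i + 2 * p.2 i - 1)‼ : ℝ)) /
              (((d - 1 + 2 * (∑ i, p.1 i) + 2 * (∑ i, p.2 i))‼ : ℝ) *
                (∏ i, ((p.1 i)! : ℝ)) * ∏ i, ((2 * p.2 i)! : ℝ))) *
            (∏ i, x i ^ p.1 i) * ∏ i, y i ^ (2 * p.2 i)|
          = r ^ (d + 2 * ((∑ i, p.1 i) + (∑ i, p.2 i))) *
            ((((d-1)‼ : ℝ) * ∏ i, ((2 * p.1 i + 2 * p.2 i - 1)‼ : ℝ)) /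
              (((d - 1 + 2 * (∑ i, p.1 i) + 2 * (∑ i, p.2 i))‼ : ℝ) *
                (∏ i, ((p.1 i)! : ℝ)) * ∏ i, ((2 * p.2 i)! : ℝ))) *
            (|∏ i, x i ^ p.1 i| * ∏ i, y i ^ (2 * p.2 i)) := by
            rw [abs_mul, abs_mul, abs_mul, abs_of_pos (pow_pos hr _),
              abs_of_nonneg (div_nonneg hA0 hB.le), abs_of_nonneg hY0]
            ring
        _ ≤ r ^ (d + 2 * ((∑ i, p.1 i) + (∑ i, p.2 i))) *
            (1 / ((∏ i, ((p.1 i)! : ℝ)) * ∏ i, ((p.2 i)! : ℝ))) *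
            (|∏ i, x i ^ p.1 i| * ∏ i, y i ^ (2 * p.2 i)) := by
            apply mul_le_mul_of_nonneg_right _ (mul_nonneg (abs_nonneg _) hY0)
            exact mul_le_mul_of_nonneg_left hdiv (by positivity)
        _ = r ^ (d + 2 * ((∑ i, p.1 i) + (∑ i, p.2 i))) *
            (∏ i, |x i| ^ p.1 i / ((p.1 i)! : ℝ)) * ∏ i, (y i ^ 2) ^ p.2 i / ((p.2 i)! : ℝ) := by
            rw [hXabs, Finset.prod_div_distrib, Finset.prod_div_distrib]
            have hYeq : ∏ i, (y i ^ 2) ^ p.2 i = ∏ i, y i ^ (2 * p.2 i) :=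
              Finset.prod_congr rfl fun i _ => by rw [← pow_mul]
            rw [hYeq]
            field_simp
    · rw [if_neg hN, if_neg hN, abs_zero]
  -- main ENNReal chain
  calc ∑' p : (Fin (d + 1) → ℕ) × (Fin (d + 1) → ℕ),
        (‖if N ≤ (∑ i, p.1 i) + (∑ i, p.2 i) then
          r ^ (d + 2 * ((∑ i, p.1 i) + (∑ i, p.2 i))) *
            (((Nat.doubleFactorial (d - 1) : ℝ) *
                  ∏ i, (Nat.doubleFactorial (2 * p.1 i + 2 * p.2 i - 1) : ℝ)) /
              ((Nat.doubleFactorial (d - 1 + 2 * (∑ i, p.1 i) + 2 * (∑ i, p.2 i)) : ℝ) *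
                (∏ i, (Nat.factorial (p.1 i) : ℝ)) *
                ∏ i, (Nat.factorial (2 * p.2 i) : ℝ))) *
            (∏ i, x i ^ p.1 i) * ∏ i, y i ^ (2 * p.2 i)
        else 0‖₊ : ℝ≥0∞)
      ≤ ∑' p, ENNReal.ofReal (g p) := by
        apply ENNReal.tsum_le_tsum
        intro p
        rw [← enorm_eq_nnnorm, ← ofReal_norm]
        apply ENNReal.ofReal_le_ofReal
        rw [Real.norm_eq_abs]
        exact hfg p
    _ = ∑' k : Fin (d + 1) ⊕ Fin (d + 1) → ℕ, ENNReal.ofReal (g (e k)) :=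
        (Equiv.tsum_eq e fun p => ENNReal.ofReal (g p)).symm
    _ = ∑' k, ENNReal.ofReal (G k) := by
        exact tsum_congr fun k => by rw [hge k]
    _ = ∑' k, ∑' n : ℕ, (if n = ∑ j, k j then ENNReal.ofReal (G k) else 0) := by
        exact tsum_congr fun k => (tsum_ite_eq (∑ j, k j) (fun _ => ENNReal.ofReal (G k))).symm
    _ = ∑' n : ℕ, ∑' k, (if n = ∑ j, k j then ENNReal.ofReal (G k) else 0) :=
        ENNReal.tsum_comm
    _ = ∑' n : ℕ, ENNReal.ofReal (t n) := by
        refine tsum_congr fun n => ?_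
        rw [tsum_eq_sum (s := Finset.piAntidiag Finset.univ n)
          (fun k hk => if_neg fun h =>
            hk (Finset.mem_piAntidiag.2 ⟨h.symm, fun i _ => Finset.mem_univ i⟩))]
        rw [Finset.sum_congr rfl (fun k hk => if_pos (Finset.mem_piAntidiag.1 hk).1.symm)]
        by_cases hN : N ≤ n
        · have hGk : ∀ k ∈ Finset.piAntidiag Finset.univ n,
              G k = r ^ (d + 2 * n) * ∏ j, c j ^ k j / ((k j)! : ℝ) := by
            intro k hk
            have h1 : ∑ j, k j = n := (Finset.mem_piAntidiag.1 hk).1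
            rw [hGdef]
            simp only []
            rw [h1, if_pos hN]
          rw [Finset.sum_congr rfl (fun k hk => by rw [hGk k hk])]
          rw [← ENNReal.ofReal_sum_of_nonneg (fun k _ => mul_nonneg (pow_nonneg hr.le _)
            (Finset.prod_nonneg fun j _ => div_nonneg (pow_nonneg (hc0 j) _) (Nat.cast_nonneg _)))]
          rw [← Finset.mul_sum, multinomial_div, hcS]
          rw [htdef]
          simp only []
          rw [if_pos hN]
          congr 1
          rw [pow_add, pow_mul, mul_pow]
          ring
        · have hGk : ∀ k ∈ Finset.piAntidiag Finset.univ n, G k = 0 := by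
            intro k hk
            rw [hGdef]
            simp only []
            rw [(Finset.mem_piAntidiag.1 hk).1, if_neg hN]
          rw [Finset.sum_congr rfl (fun k hk => by rw [hGk k hk])]
          rw [htdef]
          simp [hN]
    _ = ENNReal.ofReal (∑' n, t n) := (ENNReal.ofReal_tsum_of_nonneg ht0 hsum_t).symm
    _ ≤ ENNReal.ofReal (r ^ d / (N ! : ℝ) * (r ^ 2 * S) ^ N *
          ((N + 1) / (N + 1 - r ^ 2 * S))) := by
        apply ENNReal.ofReal_le_ofReal
        have h1 : ∑' n, t n = r ^ d * ∑' n : ℕ,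
            (if N ≤ n then (r ^ 2 * S) ^ n / n ! else 0) := by
          rw [htdef]; exact tsum_mul_left
        rw [h1]
        have h2 := exp_tail_bound (r ^ 2 * S) N hL0 hL
        calc r ^ d * ∑' n : ℕ, (if N ≤ n then (r ^ 2 * S) ^ n / n ! else 0)
            ≤ r ^ d * ((r ^ 2 * S) ^ N / N ! * ((N + 1) / (N + 1 - r ^ 2 * S))) :=
              mul_le_mul_of_nonneg_left h2 (by positivity)
          _ = r ^ d / (N ! : ℝ) * (r ^ 2 * S) ^ N * ((N + 1) / (N + 1 - r ^ 2 * S)) := by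
              ring
end

section
/- The annihilating operator C_{ij}: for 1 ≤ i < j ≤ d+1, the function Z̃(x,y,r) = ∫_{S^d(r)} exp(∑_k (x_k t_k² + y_k t_k)) |dt| satisfies 2(x_i − x_j) ∂²Z̃/∂y_i∂y_j + y_i ∂Z̃/∂y_j − y_j ∂Z̃/∂y_i = 0. -/
open MeasureTheory

/-- The restricted Fisher–Bingham normalizing constant. -/
noncomputable def Ztilde (d : ℕ) (x y : Fin (d + 1) → ℝ) (r : ℝ) : ℝ :=
  ∫ t in Metric.sphere (0 : EuclideanSpace ℝ (Fin (d + 1))) r,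
    Real.exp (∑ i, (x i * t i ^ 2 + y i * t i)) ∂(μH[(d : ℝ)])

/-- Partial derivative of a function on `Fin m → ℝ` with respect to the `i`-th
coordinate. -/
noncomputable def pd {m : ℕ} (i : Fin m) (f : (Fin m → ℝ) → ℝ) :
    (Fin m → ℝ) → ℝ :=
  fun y => deriv (fun s => f (Function.update y i s)) (y i)

open Metric Set
open scoped NNReal ENNReal

noncomputable section
namespace ZtildeAux

variable {d : ℕ} {r : ℝ}


def Q (d : ℕ) (u : Fin (d+1) → ℝ) : ℝ := ∑ m, u m ^ 2

def chart (d : ℕ) (r : ℝ) (k : Fin (d+1)) (s : ℝ) (u : Fin (d+1) → ℝ) :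
    EuclideanSpace ℝ (Fin (d+1)) :=
  (WithLp.equiv 2 (Fin (d+1) → ℝ)).symm
    (fun m => if m = k then s * Real.sqrt (r^2 - Q d u) else u m)

lemma chart_apply (k : Fin (d+1)) (s : ℝ) (u : Fin (d+1) → ℝ) (m : Fin (d+1)) :
    chart d r k s u m = if m = k then s * Real.sqrt (r^2 - Q d u) else u m := rfl

def dom (d : ℕ) (r : ℝ) (k : Fin (d+1)) : Set (Fin (d+1) → ℝ) :=
  {u | u k = 0 ∧ Q d u ≤ r^2 - r^2/(d+1)}

lemma isometry_insert (k : Fin (d+1)) :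
    Isometry (fun v : Fin d → ℝ => (Fin.insertNth (α := fun _ => ℝ) k 0 v)) := by
  refine Isometry.of_dist_eq fun u v => ?_
  rw [dist_pi_def, dist_pi_def]
  congr 1
  apply le_antisymm
  · refine Finset.sup_le fun m _ => ?_
    rcases eq_or_ne m k with rfl | hm
    · rw [Fin.insertNth_apply_same, Fin.insertNth_apply_same]
      simp
    · obtain ⟨a, rfl⟩ := Fin.exists_succAbove_eq hm
      rw [Fin.insertNth_apply_succAbove, Fin.insertNth_apply_succAbove]
      exact Finset.le_sup (f := fun b => nndist (u b) (v b)) (Finset.mem_univ a)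
  · refine Finset.sup_le fun a _ => ?_
    have h : nndist (u a) (v a) =
        nndist (Fin.insertNth (α := fun _ => ℝ) k 0 u (k.succAbove a))
          (Fin.insertNth (α := fun _ => ℝ) k 0 v (k.succAbove a)) := by
      rw [Fin.insertNth_apply_succAbove, Fin.insertNth_apply_succAbove]
    rw [h]
    exact Finset.le_sup
      (f := fun b => nndist (Fin.insertNth (α := fun _ => ℝ) k 0 u b)
        (Fin.insertNth (α := fun _ => ℝ) k 0 v b)) (Finset.mem_univ (k.succAbove a))

lemma abs_sqrt_sub_sqrt_le {a b c : ℝ} (ha : 0 ≤ a) (hb : 0 ≤ b) (hc : 0 < c)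
    (h1 : c ≤ Real.sqrt a + Real.sqrt b) : |Real.sqrt a - Real.sqrt b| ≤ |a - b| / c := by
  rw [le_div_iff₀ hc]
  have key : |Real.sqrt a - Real.sqrt b| * (Real.sqrt a + Real.sqrt b) = |a - b| := by
    rw [← abs_of_nonneg (by positivity : (0:ℝ) ≤ Real.sqrt a + Real.sqrt b), ← abs_mul]
    congr 1
    have h2 : Real.sqrt a ^ 2 = a := Real.sq_sqrt ha
    have h3 : Real.sqrt b ^ 2 = b := Real.sq_sqrt hb
    nlinarith [h2, h3]
  calc |Real.sqrt a - Real.sqrt b| * c ≤ |Real.sqrt a - Real.sqrt b| * (Real.sqrt a + Real.sqrt b) :=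
        mul_le_mul_of_nonneg_left h1 (abs_nonneg _)
    _ = |a - b| := key

lemma Q_nonneg (u : Fin (d+1) → ℝ) : 0 ≤ Q d u := Finset.sum_nonneg fun m _ => sq_nonneg _

lemma chart_lipschitz (hr : 0 < r) (k : Fin (d+1)) {s : ℝ} (hs : |s| = 1) :
    LipschitzOnWith (2*((d:ℝ≥0)+1)^2) (chart d r k s) (dom d r k) := by
  refine LipschitzOnWith.of_dist_le_mul fun u hu v hv => ?_
  set n : ℝ := (d:ℝ) + 1 with hn
  have hn1 : 1 ≤ n := by simp [hn]
  have hn0 : 0 < n := by linarith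
  have hcast : ((2*((d:ℝ≥0)+1)^2 : ℝ≥0) : ℝ) = 2 * n^2 := by push_cast [hn]; ring
  rw [hcast]
  set δ := dist u v with hδdef
  have hδ : 0 ≤ δ := dist_nonneg
  obtain ⟨huk, hQu⟩ := hu
  obtain ⟨hvk, hQv⟩ := hv
  rw [show r^2 - r^2/((d:ℝ)+1) = r^2 - r^2/n from rfl] at hQu hQv
  have hrn : 0 < r^2/n := by positivity
  have hQu' : Q d u ≤ r^2 := by linarith
  have hQv' : Q d v ≤ r^2 := by linarith
  have habs : ∀ w : Fin (d+1) → ℝ, Q d w ≤ r^2 → ∀ m, |w m| ≤ r := by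
    intro w hw m
    have h1 : w m ^ 2 ≤ r ^ 2 := by
      have h2 : w m ^ 2 ≤ Q d w :=
        Finset.single_le_sum (fun m _ => sq_nonneg (w m)) (Finset.mem_univ m)
      linarith
    have h3 := Real.sqrt_le_sqrt h1
    rwa [Real.sqrt_sq_eq_abs, Real.sqrt_sq hr.le] at h3
  have hcoord : ∀ m, |u m - v m| ≤ δ := by
    intro m
    have := dist_le_pi_dist u v m
    rwa [Real.dist_eq] at this
  have hQdiff : |Q d u - Q d v| ≤ n * (2*r) * δ := by
    have h1 : Q d u - Q d v = ∑ m, (u m ^2 - v m ^2) := by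
      rw [Q, Q, ← Finset.sum_sub_distrib]
    rw [h1]
    refine le_trans (Finset.abs_sum_le_sum_abs _ _) ?_
    have h2 : ∀ m : Fin (d+1), |u m ^2 - v m ^2| ≤ (2*r) * δ := by
      intro m
      have h3 : u m ^2 - v m ^2 = (u m - v m) * (u m + v m) := by ring
      rw [h3, abs_mul]
      have h4 : |u m + v m| ≤ 2*r := by
        have := habs u hQu' m
        have := habs v hQv' m
        have := abs_add_le (u m) (v m)
        linarith
      calc |u m - v m| * |u m + v m| ≤ δ * (2*r) :=
            mul_le_mul (hcoord m) h4 (abs_nonneg _) hδ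
        _ = (2*r) * δ := by ring
    calc ∑ m, |u m ^2 - v m ^2| ≤ ∑ _m : Fin (d+1), (2*r)*δ :=
          Finset.sum_le_sum (fun m _ => h2 m)
      _ = n * (2*r) * δ := by
          rw [Finset.sum_const, Finset.card_univ]
          simp only [Fintype.card_fin, nsmul_eq_mul, hn]
          push_cast
          ring
  set a := r^2 - Q d u with hadef
  set b := r^2 - Q d v with hbdef
  have ha : 0 ≤ a := by rw [hadef]; linarith
  have hb : 0 ≤ b := by rw [hbdef]; linarith
  have hρ : Real.sqrt (r^2/n) ≤ Real.sqrt a + Real.sqrt b := by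
    have h1 : r^2/n ≤ a := by rw [hadef]; linarith
    have := Real.sqrt_le_sqrt h1
    have := Real.sqrt_nonneg b
    linarith
  have hρ0 : 0 < Real.sqrt (r^2/n) := Real.sqrt_pos.mpr hrn
  have hk : |Real.sqrt a - Real.sqrt b| ≤ (n * (2*r) * δ) / Real.sqrt (r^2/n) := by
    refine le_trans (abs_sqrt_sub_sqrt_le ha hb hρ0 hρ) ?_
    have h5 : |a - b| = |Q d u - Q d v| := by
      rw [hadef, hbdef, show r^2 - Q d u - (r^2 - Q d v) = -(Q d u - Q d v) by ring, abs_neg]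
    rw [h5]
    gcongr
  -- termwise bound on squared distances
  have hterm : ∀ m : Fin (d+1),
      dist (chart d r k s u m) (chart d r k s v m) ^ 2 ≤ 4*n^3*δ^2 := by
    intro m
    rcases eq_or_ne m k with rfl | hm
    · rw [chart_apply, chart_apply, if_pos rfl, if_pos rfl, Real.dist_eq]
      have h6 : |s * Real.sqrt a - s * Real.sqrt b| = |Real.sqrt a - Real.sqrt b| := by
        rw [show s * Real.sqrt a - s * Real.sqrt b = s * (Real.sqrt a - Real.sqrt b) by ring,
          abs_mul, hs, one_mul]
      rw [h6]
      have h7 := pow_le_pow_left₀ (abs_nonneg _) hk 2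
      refine le_trans h7 ?_
      have h8 : ((n * (2*r) * δ) / Real.sqrt (r^2/n))^2 = 4*n^3*δ^2 := by
        rw [div_pow, Real.sq_sqrt hrn.le]
        field_simp
        ring
      rw [h8]
    · rw [chart_apply, chart_apply, if_neg hm, if_neg hm, Real.dist_eq]
      have h9 := pow_le_pow_left₀ (abs_nonneg _) (hcoord m) 2
      rw [sq_abs] at h9
      have h10 : |u m - v m|^2 ≤ δ^2 := by rw [sq_abs]; exact h9
      have h11 : (1:ℝ) ≤ n^3 := one_le_pow₀ hn1
      nlinarith [h10, h11, sq_nonneg δ]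
  rw [EuclideanSpace.dist_eq]
  have hsum : ∑ m, dist (chart d r k s u m) (chart d r k s v m) ^ 2 ≤ (2*n^2*δ)^2 := by
    calc ∑ m, dist (chart d r k s u m) (chart d r k s v m) ^ 2
        ≤ ∑ _m : Fin (d+1), 4*n^3*δ^2 := Finset.sum_le_sum fun m _ => hterm m
      _ = n * (4*n^3*δ^2) := by
          rw [Finset.sum_const, Finset.card_univ]
          simp only [Fintype.card_fin, nsmul_eq_mul, hn]
          push_cast
          ring
      _ = (2*n^2*δ)^2 := by ring
  calc Real.sqrt (∑ m, dist (chart d r k s u m) (chart d r k s v m) ^ 2)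
      ≤ Real.sqrt ((2*n^2*δ)^2) := Real.sqrt_le_sqrt hsum
    _ = 2*n^2*δ := Real.sqrt_sq (by positivity)


lemma abs_coord_le (hr : 0 ≤ r) {w : Fin (d+1) → ℝ} (hw : Q d w ≤ r^2) (m : Fin (d+1)) :
    |w m| ≤ r := by
  have h1 : w m ^ 2 ≤ r ^ 2 := by
    have h2 : w m ^ 2 ≤ Q d w :=
      Finset.single_le_sum (fun m _ => sq_nonneg (w m)) (Finset.mem_univ m)
    linarith
  have h3 := Real.sqrt_le_sqrt h1
  rwa [Real.sqrt_sq_eq_abs, Real.sqrt_sq hr] at h3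

lemma sphere_subset (hr : 0 < r) :
    sphere (0 : EuclideanSpace ℝ (Fin (d+1))) r ⊆
      ⋃ k : Fin (d+1), (chart d r k 1 '' dom d r k ∪ chart d r k (-1) '' dom d r k) := by
  intro t ht
  have hnorm : ‖t‖ = r := by simpa using ht
  have hsum : ∑ m, t m ^ 2 = r ^ 2 := by
    have h1 := EuclideanSpace.norm_eq t
    rw [hnorm] at h1
    have h2 : ∑ m, ‖t m‖^2 = ∑ m, t m ^2 :=
      Finset.sum_congr rfl fun m _ => by rw [Real.norm_eq_abs, sq_abs]
    rw [h2] at h1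
    have h3 : 0 ≤ ∑ m, t m ^2 := Finset.sum_nonneg fun m _ => sq_nonneg _
    nlinarith [Real.sq_sqrt h3, h1]
  obtain ⟨k, -, hk⟩ := Finset.exists_max_image Finset.univ (fun m => t m ^ 2)
    ⟨0, Finset.mem_univ 0⟩
  have hk2 : r^2 ≤ ((d:ℝ)+1) * t k ^2 := by
    calc r^2 = ∑ m, t m ^2 := hsum.symm
      _ ≤ ∑ _m : Fin (d+1), t k ^2 := Finset.sum_le_sum fun m _ => hk m (Finset.mem_univ m)
      _ = ((d:ℝ)+1) * t k^2 := by
          rw [Finset.sum_const, Finset.card_univ]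
          simp only [Fintype.card_fin, nsmul_eq_mul]
          push_cast
          ring
  set u : Fin (d+1) → ℝ := Function.update (fun m => t m) k 0 with hu
  have hQ : Q d u = r^2 - t k ^2 := by
    have h4 : Q d u = ∑ m, (Function.update (fun m => t m ^ 2) k 0) m := by
      refine Finset.sum_congr rfl fun m _ => ?_
      rcases eq_or_ne m k with rfl | hm
      · simp [hu]
      · simp [hu, Function.update_of_ne hm]
    rw [h4, Finset.sum_update_of_mem (Finset.mem_univ k)]
    have h5 := Finset.add_sum_erase Finset.univ (fun m => t m ^ 2) (Finset.mem_univ k)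
    rw [hsum, Finset.erase_eq] at h5
    simp only at h5 ⊢
    linarith [h5]
  have hdom : u ∈ dom d r k := by
    constructor
    · simp [hu]
    · rw [hQ]
      have h6 : r^2/((d:ℝ)+1) ≤ t k ^2 := by
        rw [div_le_iff₀ (by positivity : (0:ℝ) < (d:ℝ)+1)]
        linarith [hk2]
      have : r ^ 2 / ((d:ℝ) + 1) = r ^ 2 / (↑d + 1) := rfl
      linarith [h6]
  set s : ℝ := if 0 ≤ t k then 1 else -1 with hs
  have hchart : chart d r k s u = t := by
    refine PiLp.ext fun m => ?_
    rw [chart_apply]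
    rcases eq_or_ne m k with rfl | hm
    · rw [if_pos rfl, hQ, show r^2 - (r^2 - t m ^2) = t m ^2 by ring,
        Real.sqrt_sq_eq_abs]
      rcases le_or_gt 0 (t m) with h | h
      · rw [hs, if_pos h, one_mul, abs_of_nonneg h]
      · rw [hs, if_neg (not_le.mpr h), abs_of_neg h]
        ring
    · rw [if_neg hm, hu, Function.update_of_ne hm]
  refine Set.mem_iUnion.mpr ⟨k, ?_⟩
  rcases le_or_gt 0 (t k) with h | h
  · exact Or.inl ⟨u, hdom, by rwa [show (1:ℝ) = s by rw [hs, if_pos h]]⟩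
  · exact Or.inr ⟨u, hdom, by rwa [show (-1:ℝ) = s by rw [hs, if_neg (not_le.mpr h)]]⟩

lemma sphere_hausdorff_lt_top (hr : 0 < r) :
    μH[(d:ℝ)] (sphere (0 : EuclideanSpace ℝ (Fin (d+1))) r) < ⊤ := by
  have hd0 : (0:ℝ) ≤ d := Nat.cast_nonneg d
  have piece : ∀ (k : Fin (d+1)) (s : ℝ), |s| = 1 →
      μH[(d:ℝ)] (chart d r k s '' dom d r k) < ⊤ := by
    intro k s hs
    refine lt_of_le_of_lt ((chart_lipschitz hr k hs).hausdorffMeasure_image_le hd0) ?_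
    have hdom : μH[(d:ℝ)] (dom d r k) < ⊤ := by
      have hsub : dom d r k ⊆
          (fun v : Fin d → ℝ => Fin.insertNth (α := fun _ => ℝ) k 0 v) '' closedBall 0 r := by
        intro u hu
        have hQu : Q d u ≤ r^2 := by
          have := hu.2
          have h7 : 0 ≤ r^2/((d:ℝ)+1) := by positivity
          have h8 : r ^ 2 / ((d:ℝ) + 1) = r ^ 2 / (↑d + 1) := rfl
          linarith
        refine ⟨fun a => u (k.succAbove a), ?_, ?_⟩
        · rw [mem_closedBall, dist_pi_le_iff hr.le]
          intro b
          rw [Pi.zero_apply, Real.dist_0_eq_abs]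
          exact abs_coord_le hr.le hQu _
        · funext m
          rcases eq_or_ne m k with rfl | hm
          · simp only [Fin.insertNth_apply_same]
            exact hu.1.symm
          · obtain ⟨a, rfl⟩ := Fin.exists_succAbove_eq hm
            simp only [Fin.insertNth_apply_succAbove]
      calc μH[(d:ℝ)] (dom d r k) ≤ _ := measure_mono hsub
        _ = μH[(d:ℝ)] (closedBall (0 : Fin d → ℝ) r) :=
            (isometry_insert k).hausdorffMeasure_image (Or.inl hd0) _
        _ = volume (closedBall (0 : Fin d → ℝ) r) := by
            rw [show ((d:ℝ)) = ((Fintype.card (Fin d) : ℕ) : ℝ) by simp,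
              hausdorffMeasure_pi_real]
        _ < ⊤ := (isCompact_closedBall _ _).measure_lt_top
    exact ENNReal.mul_lt_top
      (ENNReal.rpow_lt_top_of_nonneg hd0 ENNReal.coe_ne_top) hdom
  refine lt_of_le_of_lt (measure_mono (sphere_subset hr))
    (lt_of_le_of_lt (measure_iUnion_le _) ?_)
  rw [tsum_fintype]
  refine ENNReal.sum_lt_top.mpr fun k _ => ?_
  exact lt_of_le_of_lt (measure_union_le _ _)
    (ENNReal.add_lt_top.mpr ⟨piece k 1 (by norm_num), piece k (-1) (by norm_num)⟩)


variable {d : ℕ}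

def rotFun (i j : Fin (d+1)) (θ : ℝ) (t : Fin (d+1) → ℝ) (m : Fin (d+1)) : ℝ :=
  if m = i then Real.cos θ * t i - Real.sin θ * t j
  else if m = j then Real.sin θ * t i + Real.cos θ * t j
  else t m

def rot (i j : Fin (d+1)) (θ : ℝ) (t : EuclideanSpace ℝ (Fin (d+1))) :
    EuclideanSpace ℝ (Fin (d+1)) :=
  (WithLp.equiv 2 (Fin (d+1) → ℝ)).symm (rotFun i j θ (fun m => t m))

lemma rot_apply (i j : Fin (d+1)) (θ : ℝ) (t : EuclideanSpace ℝ (Fin (d+1))) (m : Fin (d+1)) :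
    rot i j θ t m = rotFun i j θ (fun m => t m) m := rfl

lemma rot_apply_i (i j : Fin (d+1)) (θ : ℝ) (t : EuclideanSpace ℝ (Fin (d+1))) :
    rot i j θ t i = Real.cos θ * t i - Real.sin θ * t j := by
  rw [rot_apply]; unfold rotFun; rw [if_pos rfl]

lemma rot_apply_j (i j : Fin (d+1)) (hij : i ≠ j) (θ : ℝ)
    (t : EuclideanSpace ℝ (Fin (d+1))) :
    rot i j θ t j = Real.sin θ * t i + Real.cos θ * t j := by
  rw [rot_apply]; unfold rotFun; rw [if_neg hij.symm, if_pos rfl]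

lemma rot_apply_ne (i j : Fin (d+1)) (θ : ℝ) (t : EuclideanSpace ℝ (Fin (d+1)))
    {m : Fin (d+1)} (hmi : m ≠ i) (hmj : m ≠ j) : rot i j θ t m = t m := by
  rw [rot_apply]; unfold rotFun; rw [if_neg hmi, if_neg hmj]

lemma sum_split {i j : Fin (d+1)} (hij : i ≠ j) (g : Fin (d+1) → ℝ) :
    ∑ m, g m = g i + g j + ∑ m ∈ (Finset.univ.erase i).erase j, g m := by
  rw [← Finset.add_sum_erase _ g (Finset.mem_univ i),
    ← Finset.add_sum_erase _ g (Finset.mem_erase.mpr ⟨hij.symm, Finset.mem_univ j⟩)]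
  ring

lemma rot_dist (i j : Fin (d+1)) (hij : i ≠ j) (θ : ℝ)
    (u v : EuclideanSpace ℝ (Fin (d+1))) : dist (rot i j θ u) (rot i j θ v) = dist u v := by
  rw [EuclideanSpace.dist_eq, EuclideanSpace.dist_eq]
  congr 1
  rw [sum_split hij (fun m => dist (rot i j θ u m) (rot i j θ v m) ^ 2),
    sum_split hij (fun m => dist (u m) (v m) ^ 2)]
  have htail : ∑ m ∈ (Finset.univ.erase i).erase j, dist (rot i j θ u m) (rot i j θ v m) ^ 2
      = ∑ m ∈ (Finset.univ.erase i).erase j, dist (u m) (v m) ^ 2 := by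
    refine Finset.sum_congr rfl fun m hm => ?_
    have hmj : m ≠ j := (Finset.mem_erase.mp hm).1
    have hmi : m ≠ i := (Finset.mem_erase.mp (Finset.mem_erase.mp hm).2).1
    rw [rot_apply_ne i j θ u hmi hmj, rot_apply_ne i j θ v hmi hmj]
  rw [htail, rot_apply_i, rot_apply_i, rot_apply_j i j hij, rot_apply_j i j hij,
    Real.dist_eq, Real.dist_eq, Real.dist_eq, Real.dist_eq, sq_abs, sq_abs, sq_abs, sq_abs]
  linear_combination ((u i - v i)^2 + (u j - v j)^2) * Real.sin_sq_add_cos_sq θ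

lemma rot_rot_neg (i j : Fin (d+1)) (hij : i ≠ j) (θ : ℝ)
    (t : EuclideanSpace ℝ (Fin (d+1))) : rot i j (-θ) (rot i j θ t) = t := by
  refine PiLp.ext fun m => ?_
  rcases eq_or_ne m i with hmi | hmi
  · rw [hmi, rot_apply_i i j (-θ), rot_apply_i i j θ, rot_apply_j i j hij θ,
      Real.cos_neg, Real.sin_neg]
    linear_combination (t i) * Real.sin_sq_add_cos_sq θ
  · rcases eq_or_ne m j with hmj | hmj
    · rw [hmj, rot_apply_j i j hij (-θ), rot_apply_i i j θ, rot_apply_j i j hij θ,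
        Real.cos_neg, Real.sin_neg]
      linear_combination (t j) * Real.sin_sq_add_cos_sq θ
    · rw [rot_apply_ne i j (-θ) _ hmi hmj, rot_apply_ne i j θ t hmi hmj]

def rotEquiv (i j : Fin (d+1)) (hij : i ≠ j) (θ : ℝ) :
    EuclideanSpace ℝ (Fin (d+1)) ≃ᵢ EuclideanSpace ℝ (Fin (d+1)) :=
  IsometryEquiv.mk
    ⟨rot i j θ, rot i j (-θ), fun t => rot_rot_neg i j hij θ t,
      fun t => by have := rot_rot_neg i j hij (-θ) t; rwa [neg_neg] at this⟩
    (Isometry.of_dist_eq (rot_dist i j hij θ))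

lemma rot_zero_eq_zero (i j : Fin (d+1)) (θ : ℝ) :
    rot i j θ (0 : EuclideanSpace ℝ (Fin (d+1))) = 0 := by
  refine PiLp.ext fun m => ?_
  have h0 : ∀ m : Fin (d+1), (0 : EuclideanSpace ℝ (Fin (d+1))) m = 0 := fun _ => rfl
  rcases eq_or_ne m i with hmi | hmi
  · rw [hmi, rot_apply_i]; simp only [h0]; ring
  · rcases eq_or_ne m j with hmj | hmj
    · rcases eq_or_ne i j with hij | hij
      · rw [hmj, ← hij, rot_apply_i]; simp only [h0]; ring
      · rw [hmj, rot_apply_j i j hij]; simp only [h0]; ring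
    · rw [rot_apply_ne i j θ _ hmi hmj]

lemma rot_preimage_sphere (i j : Fin (d+1)) (hij : i ≠ j) (θ r : ℝ) :
    (rot i j θ) ⁻¹' (sphere (0 : EuclideanSpace ℝ (Fin (d+1))) r) = sphere 0 r := by
  ext t
  have hd : dist (rot i j θ t) 0 = dist t 0 := by
    conv_lhs => rw [← rot_zero_eq_zero i j θ]
    exact rot_dist i j hij θ t 0
  simp only [Set.mem_preimage, Metric.mem_sphere, hd]

lemma integral_rot (i j : Fin (d+1)) (hij : i ≠ j) (θ r : ℝ)
    (F : EuclideanSpace ℝ (Fin (d+1)) → ℝ) :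
    ∫ t, F t ∂(μH[(d:ℝ)].restrict (sphere (0 : EuclideanSpace ℝ (Fin (d+1))) r))
      = ∫ t, F (rot i j θ t)
          ∂(μH[(d:ℝ)].restrict (sphere (0 : EuclideanSpace ℝ (Fin (d+1))) r)) := by
  set e := rotEquiv i j hij θ with he
  have hme : Measurable (rot i j θ) := e.continuous.measurable
  have h1 : Measure.map (rot i j θ)
      (μH[(d:ℝ)].restrict (sphere (0 : EuclideanSpace ℝ (Fin (d+1))) r))
      = μH[(d:ℝ)].restrict (sphere 0 r) := by
    calc Measure.map (rot i j θ) (μH[(d:ℝ)].restrict (sphere 0 r))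
        = Measure.map (rot i j θ) (μH[(d:ℝ)].restrict ((rot i j θ) ⁻¹' sphere 0 r)) := by
          rw [rot_preimage_sphere i j hij]
      _ = (Measure.map (rot i j θ) μH[(d:ℝ)]).restrict (sphere 0 r) :=
          (Measure.restrict_map hme isClosed_sphere.measurableSet).symm
      _ = μH[(d:ℝ)].restrict (sphere 0 r) := by
          rw [show Measure.map (rot i j θ) μH[(d:ℝ)] = Measure.map (⇑e) μH[(d:ℝ)] from rfl,
            e.map_hausdorffMeasure]
  conv_lhs => rw [← h1]
  rw [show Measure.map (rot i j θ)
      (μH[(d:ℝ)].restrict (sphere (0 : EuclideanSpace ℝ (Fin (d+1))) r))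
      = Measure.map (⇑(e.toHomeomorph.toMeasurableEquiv))
        (μH[(d:ℝ)].restrict (sphere (0 : EuclideanSpace ℝ (Fin (d+1))) r)) from rfl]
  rw [MeasureTheory.integral_map_equiv]
  rfl



def smu (d : ℕ) (r : ℝ) : Measure (EuclideanSpace ℝ (Fin (d+1))) :=
  μH[(d:ℝ)].restrict (sphere (0 : EuclideanSpace ℝ (Fin (d+1))) r)

def ex (x y : Fin (d+1) → ℝ) (t : EuclideanSpace ℝ (Fin (d+1))) : ℝ :=
  Real.exp (∑ k, (x k * t k ^ 2 + y k * t k))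

lemma isFiniteMeasure_smu {d : ℕ} {r : ℝ} (hr : 0 < r) : IsFiniteMeasure (smu d r) :=
  ⟨by rw [smu, Measure.restrict_apply_univ]; exact sphere_hausdorff_lt_top hr⟩

lemma cont_coord (k : Fin (d+1)) :
    Continuous (fun t : EuclideanSpace ℝ (Fin (d+1)) => t k) :=
  (EuclideanSpace.proj (𝕜 := ℝ) k).continuous

lemma cont_ex (x y : Fin (d+1) → ℝ) : Continuous (ex x y) := by
  apply Real.continuous_exp.comp
  exact continuous_finset_sum _ fun k _ =>
    (continuous_const.mul ((cont_coord k).pow 2)).add (continuous_const.mul (cont_coord k))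

lemma sum_sq_sphere {r : ℝ} (hr : 0 ≤ r) {t : EuclideanSpace ℝ (Fin (d+1))}
    (ht : t ∈ sphere (0 : EuclideanSpace ℝ (Fin (d+1))) r) : ∑ m, t m ^ 2 = r ^ 2 := by
  have hnorm : ‖t‖ = r := by simpa using ht
  have h1 := EuclideanSpace.norm_eq t
  rw [hnorm] at h1
  have h2 : ∑ m, ‖t m‖^2 = ∑ m, t m ^2 :=
    Finset.sum_congr rfl fun m _ => by rw [Real.norm_eq_abs, sq_abs]
  rw [h2] at h1
  have h3 : 0 ≤ ∑ m, t m ^2 := Finset.sum_nonneg fun m _ => sq_nonneg _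
  nlinarith [Real.sq_sqrt h3, h1]

lemma abs_coord_sphere {r : ℝ} (hr : 0 ≤ r) {t : EuclideanSpace ℝ (Fin (d+1))}
    (ht : t ∈ sphere (0 : EuclideanSpace ℝ (Fin (d+1))) r) (k : Fin (d+1)) : |t k| ≤ r := by
  refine abs_coord_le hr (w := fun m => t m) ?_ k
  rw [Q, sum_sq_sphere hr ht]

lemma sum_quad_le (x y : Fin (d+1) → ℝ) {c : ℝ} {f : Fin (d+1) → ℝ}
    (hf : ∀ k, |f k| ≤ c) :
    ∑ k, (x k * f k ^ 2 + y k * f k) ≤ ∑ k, (|x k| * c^2 + |y k| * c) := by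
  refine Finset.sum_le_sum fun k _ => ?_
  have h1 := hf k
  have h0 : 0 ≤ c := le_trans (abs_nonneg _) h1
  have h2 : f k ^2 ≤ c^2 := by nlinarith [abs_nonneg (f k), sq_abs (f k)]
  have h3 : x k * f k ^2 ≤ |x k| * c^2 :=
    calc x k * f k^2 ≤ |x k| * f k^2 := mul_le_mul_of_nonneg_right (le_abs_self _) (sq_nonneg _)
      _ ≤ |x k| * c^2 := mul_le_mul_of_nonneg_left h2 (abs_nonneg _)
  have h4 : y k * f k ≤ |y k| * c :=
    calc y k * f k ≤ |y k * f k| := le_abs_self _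
      _ = |y k| * |f k| := abs_mul _ _
      _ ≤ |y k| * c := mul_le_mul_of_nonneg_left h1 (abs_nonneg _)
  linarith

lemma integrable_weight {d : ℕ} {r : ℝ} (hr : 0 < r) (x y : Fin (d+1) → ℝ)
    (w : EuclideanSpace ℝ (Fin (d+1)) → ℝ) (hw : Continuous w) (W : ℝ)
    (hwb : ∀ t ∈ sphere (0 : EuclideanSpace ℝ (Fin (d+1))) r, |w t| ≤ W) :
    Integrable (fun t => w t * ex x y t) (smu d r) := by
  haveI := isFiniteMeasure_smu (d := d) hr
  refine Integrable.mono'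
    (integrable_const (W * Real.exp (∑ k, (|x k| * r^2 + |y k| * r))))
    ((hw.mul (cont_ex x y)).aestronglyMeasurable) ?_
  have hmem : ∀ᵐ t ∂(smu d r), t ∈ sphere (0 : EuclideanSpace ℝ (Fin (d+1))) r :=
    ae_restrict_mem isClosed_sphere.measurableSet
  filter_upwards [hmem] with t ht
  rw [Real.norm_eq_abs, abs_mul]
  have h1 := hwb t ht
  have h2 : ex x y t ≤ Real.exp (∑ k, (|x k| * r^2 + |y k| * r)) :=
    Real.exp_le_exp.mpr (sum_quad_le x y (fun k => abs_coord_sphere hr.le ht k))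
  have h3 : |ex x y t| = ex x y t := abs_of_pos (Real.exp_pos _)
  calc |w t| * |ex x y t| ≤ W * Real.exp (∑ k, (|x k| * r^2 + |y k| * r)) := by
        rw [h3]
        exact mul_le_mul h1 h2 (le_of_lt (Real.exp_pos _)) (le_trans (abs_nonneg _) h1)



lemma abs_update_sum_le {d : ℕ} (y : Fin (d+1) → ℝ) (j : Fin (d+1)) {s r : ℝ}
    (hr : 0 ≤ r) (hs : |s - y j| ≤ 1) :
    ∑ k, |Function.update y j s k| * r ≤ (∑ k, |y k| * r) + r := by
  have h1 : ∑ k, |Function.update y j s k| * r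
      = ∑ k, Function.update (fun k => |y k| * r) j (|s| * r) k := by
    refine Finset.sum_congr rfl fun k _ => ?_
    rcases eq_or_ne k j with rfl | hk
    · rw [Function.update_self, Function.update_self]
    · rw [Function.update_of_ne hk, Function.update_of_ne hk]
  rw [h1, Finset.sum_update_of_mem (Finset.mem_univ j)]
  have h2 := Finset.add_sum_erase Finset.univ (fun k => |y k| * r) (Finset.mem_univ j)
  rw [Finset.erase_eq] at h2
  have h3 : |s| ≤ |y j| + 1 := by
    calc |s| = |(s - y j) + y j| := by ring_nf
      _ ≤ |s - y j| + |y j| := abs_add_le _ _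
      _ ≤ |y j| + 1 := by linarith
  have h4 : |s| * r ≤ |y j| * r + r := by nlinarith
  linarith [h2, h4]

lemma hasDerivAt_key {d : ℕ} {r : ℝ} (hr : 0 < r) (x y : Fin (d+1) → ℝ) (j : Fin (d+1))
    (w : EuclideanSpace ℝ (Fin (d+1)) → ℝ) (hw : Continuous w) (W : ℝ)
    (hwb : ∀ t ∈ sphere (0 : EuclideanSpace ℝ (Fin (d+1))) r, |w t| ≤ W) :
    HasDerivAt (fun s => ∫ t, w t * ex x (Function.update y j s) t ∂(smu d r))
      (∫ t, t j * w t * ex x y t ∂(smu d r)) (y j) := by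
  haveI := isFiniteMeasure_smu (d := d) hr
  set B : ℝ := ∑ k, (|x k| * r^2 + |y k| * r) with hB
  have hmem : ∀ᵐ t ∂(smu d r), t ∈ sphere (0 : EuclideanSpace ℝ (Fin (d+1))) r :=
    ae_restrict_mem isClosed_sphere.measurableSet
  -- pointwise exponent splitting
  have hsplit : ∀ (s' : ℝ) (t : EuclideanSpace ℝ (Fin (d+1))),
      ∑ k, (x k * t k^2 + Function.update y j s' k * t k)
        = ((∑ k, (x k * t k^2 + y k * t k)) - y j * t j) + s' * t j := by
    intro s' t
    have h7 : ∀ k, x k * t k^2 + Function.update y j s' k * t k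
        = (x k * t k^2 + y k * t k) + (if k = j then (s' - y j) * t k else 0) := by
      intro k
      rcases eq_or_ne k j with rfl | hk
      · rw [Function.update_self, if_pos rfl]; ring
      · rw [Function.update_of_ne hk, if_neg hk]; ring
    rw [Finset.sum_congr rfl (fun k _ => h7 k), Finset.sum_add_distrib,
      Finset.sum_ite_eq' Finset.univ j (fun k => (s' - y j) * t k),
      if_pos (Finset.mem_univ j)]
    ring
  have key := hasDerivAt_integral_of_dominated_loc_of_deriv_le
    (μ := smu d r)
    (F := fun s t => w t * ex x (Function.update y j s) t)
    (F' := fun s t => t j * (w t * ex x (Function.update y j s) t))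
    (x₀ := y j)
    (bound := fun _ => r * (W * Real.exp (B + r)))
    (s := Metric.ball (y j) 1) (Metric.ball_mem_nhds _ one_pos)
    (Filter.Eventually.of_forall fun s =>
      ((hw.mul (cont_ex x (Function.update y j s))).aestronglyMeasurable))
    (by
      show Integrable (fun t => w t * ex x (Function.update y j (y j)) t) (smu d r)
      rw [Function.update_eq_self]
      exact integrable_weight hr x y w hw W hwb)
    (((cont_coord j).mul (hw.mul (cont_ex x (Function.update y j (y j))))).aestronglyMeasurable)
    (by
      filter_upwards [hmem] with t ht
      intro s hs
      have hs1 : |s - y j| ≤ 1 := le_of_lt (by rwa [Metric.mem_ball, Real.dist_eq] at hs)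
      rw [Real.norm_eq_abs, abs_mul, abs_mul]
      have h9 : |t j| ≤ r := abs_coord_sphere hr.le ht j
      have h10 : |w t| ≤ W := hwb t ht
      have h11 : ex x (Function.update y j s) t ≤ Real.exp (B + r) := by
        rw [ex]
        refine Real.exp_le_exp.mpr ?_
        refine le_trans (sum_quad_le x (Function.update y j s)
          (fun k => abs_coord_sphere hr.le ht k)) ?_
        have hsum : ∑ k, (|x k| * r^2 + |Function.update y j s k| * r)
            = (∑ k, |x k| * r^2) + ∑ k, |Function.update y j s k| * r :=
          Finset.sum_add_distrib
        have hsum2 : B = (∑ k, |x k| * r^2) + ∑ k, |y k| * r := by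
          rw [hB]; exact Finset.sum_add_distrib
        have h := abs_update_sum_le y j hr.le hs1
        rw [hsum, hsum2]
        linarith
      have h12 : |ex x (Function.update y j s) t| = ex x (Function.update y j s) t :=
        abs_of_pos (Real.exp_pos _)
      calc |t j| * (|w t| * |ex x (Function.update y j s) t|)
          ≤ r * (W * Real.exp (B + r)) := by
            rw [h12]
            have hW0 : 0 ≤ W := le_trans (abs_nonneg _) h10
            have he0 : (0:ℝ) ≤ ex x (Function.update y j s) t := le_of_lt (Real.exp_pos _)
            refine mul_le_mul h9 (mul_le_mul h10 h11 he0 hW0) (by positivity) hr.le)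
    (integrable_const _)
    (by
      refine Filter.Eventually.of_forall fun t => ?_
      intro s hs
      have h8 : (fun s' => w t * ex x (Function.update y j s') t)
          = fun s' => w t * Real.exp (((∑ k, (x k * t k^2 + y k * t k)) - y j * t j)
              + s' * t j) := by
        funext s'
        simp only [ex]; rw [hsplit s' t]
      rw [h8]
      have h9 : HasDerivAt (fun s' : ℝ =>
          ((∑ k, (x k * t k^2 + y k * t k)) - y j * t j) + s' * t j) (t j) s := by
        simpa using ((hasDerivAt_id s).mul_const (t j)).const_add
          ((∑ k, (x k * t k^2 + y k * t k)) - y j * t j)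
      have h10 := (h9.exp).const_mul (w t)
      refine h10.congr_deriv ?_
      simp only [ex]; rw [hsplit s t]
      ring)
  have h13 : (fun t : EuclideanSpace ℝ (Fin (d+1)) =>
      t j * (w t * ex x (Function.update y j (y j)) t))
      = fun t => t j * w t * ex x y t := by
    funext t
    rw [Function.update_eq_self]
    ring
  rw [h13] at key
  exact key.2



lemma Ztilde_eq {d : ℕ} (x y : Fin (d+1) → ℝ) (r : ℝ) :
    Ztilde d x y r = ∫ t, ex x y t ∂(smu d r) := rfl

lemma pd_formula {d : ℕ} {r : ℝ} (hr : 0 < r) (x y : Fin (d+1) → ℝ) (j : Fin (d+1)) :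
    pd j (fun y' => Ztilde d x y' r) y = ∫ t, t j * ex x y t ∂(smu d r) := by
  have h := hasDerivAt_key hr x y j (fun _ => 1) continuous_const 1 (fun t _ => by norm_num)
  simp only [one_mul, mul_one] at h
  show deriv (fun s => Ztilde d x (Function.update y j s) r) (y j) = _
  have h2 : (fun s => Ztilde d x (Function.update y j s) r)
      = fun s => ∫ t, ex x (Function.update y j s) t ∂(smu d r) := rfl
  rw [h2]
  exact h.deriv

lemma pd2_formula {d : ℕ} {r : ℝ} (hr : 0 < r) (x y : Fin (d+1) → ℝ) (i j : Fin (d+1)) :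
    pd i (pd j (fun y' => Ztilde d x y' r)) y
      = ∫ t, t i * t j * ex x y t ∂(smu d r) := by
  have h := hasDerivAt_key hr x y i (fun t => t j) (cont_coord j) r
    (fun t ht => abs_coord_sphere hr.le ht j)
  show deriv (fun s => pd j (fun y' => Ztilde d x y' r) (Function.update y i s)) (y i) = _
  have h2 : (fun s => pd j (fun y' => Ztilde d x y' r) (Function.update y i s))
      = fun s => ∫ t, t j * ex x (Function.update y i s) t ∂(smu d r) :=
    funext fun s => pd_formula hr x _ j
  rw [h2]
  exact h.deriv

def rotD (i j : Fin (d+1)) (θ : ℝ) (t : Fin (d+1) → ℝ) (m : Fin (d+1)) : ℝ :=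
  if m = i then -Real.sin θ * t i - Real.cos θ * t j
  else if m = j then Real.cos θ * t i - Real.sin θ * t j
  else 0

lemma hasDerivAt_rotFun (i j : Fin (d+1)) (t : Fin (d+1) → ℝ) (m : Fin (d+1)) (θ : ℝ) :
    HasDerivAt (fun ψ => rotFun i j ψ t m) (rotD i j θ t m) θ := by
  unfold rotFun rotD
  rcases eq_or_ne m i with h1 | h1
  · simp only [if_pos h1]
    exact ((Real.hasDerivAt_cos θ).mul_const (t i)).sub ((Real.hasDerivAt_sin θ).mul_const (t j))
  · rcases eq_or_ne m j with h2 | h2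
    · simp only [if_neg h1, if_pos h2]
      have h3 := ((Real.hasDerivAt_sin θ).mul_const (t i)).fun_add
        ((Real.hasDerivAt_cos θ).mul_const (t j))
      refine h3.congr_deriv ?_
      ring
    · simp only [if_neg h1, if_neg h2]
      exact hasDerivAt_const θ (t m)

lemma rot_abs_key {c : ℝ} {ti tj : ℝ} (hi : |ti| ≤ c) (hj : |tj| ≤ c)
    {a b : ℝ} (ha : |a| ≤ 1) (hb : |b| ≤ 1) : |a * ti + b * tj| ≤ 2*c := by
  calc |a * ti + b * tj| ≤ |a * ti| + |b * tj| := abs_add_le _ _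
    _ = |a| *|ti| + |b| *|tj| := by rw [abs_mul, abs_mul]
    _ ≤ 1*c + 1*c := add_le_add
        (mul_le_mul ha hi (abs_nonneg _) zero_le_one)
        (mul_le_mul hb hj (abs_nonneg _) zero_le_one)
    _ = 2*c := by ring

lemma rotFun_abs_le (i j : Fin (d+1)) {t : Fin (d+1) → ℝ} {c : ℝ}
    (h : ∀ m, |t m| ≤ c) (θ : ℝ) (m : Fin (d+1)) : |rotFun i j θ t m| ≤ 2*c := by
  have hc : 0 ≤ c := le_trans (abs_nonneg _) (h i)
  unfold rotFun
  split_ifs with h1 h2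
  · have h3 := rot_abs_key (h i) (h j) (Real.abs_cos_le_one θ)
      (by rw [abs_neg]; exact Real.abs_sin_le_one θ)
    rw [show Real.cos θ * t i - Real.sin θ * t j
      = Real.cos θ * t i + (-Real.sin θ) * t j by ring]
    exact h3
  · exact rot_abs_key (h i) (h j) (Real.abs_sin_le_one θ) (Real.abs_cos_le_one θ)
  · calc |t m| ≤ c := h m
      _ ≤ 2*c := by linarith

lemma rotD_abs_le (i j : Fin (d+1)) {t : Fin (d+1) → ℝ} {c : ℝ}
    (h : ∀ m, |t m| ≤ c) (θ : ℝ) (m : Fin (d+1)) : |rotD i j θ t m| ≤ 2*c := by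
  have hc : 0 ≤ c := le_trans (abs_nonneg _) (h i)
  unfold rotD
  split_ifs with h1 h2
  · have h3 := rot_abs_key (h i) (h j)
      (by rw [abs_neg]; exact Real.abs_sin_le_one θ)
      (by rw [abs_neg]; exact Real.abs_cos_le_one θ)
    rw [show -Real.sin θ * t i - Real.cos θ * t j
      = (-Real.sin θ) * t i + (-Real.cos θ) * t j by ring]
    exact h3
  · have h3 := rot_abs_key (h i) (h j) (Real.abs_cos_le_one θ)
      (by rw [abs_neg]; exact Real.abs_sin_le_one θ)
    rw [show Real.cos θ * t i - Real.sin θ * t j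
      = Real.cos θ * t i + (-Real.sin θ) * t j by ring]
    exact h3
  · rw [abs_zero]; linarith

lemma cont_rotFun (i j : Fin (d+1)) (θ : ℝ) (k : Fin (d+1)) :
    Continuous (fun t : EuclideanSpace ℝ (Fin (d+1)) => rotFun i j θ (fun m => t m) k) := by
  unfold rotFun
  split_ifs with h1 h2
  · exact (continuous_const.mul (cont_coord i)).sub (continuous_const.mul (cont_coord j))
  · exact (continuous_const.mul (cont_coord i)).add (continuous_const.mul (cont_coord j))
  · exact cont_coord k

lemma cont_rotD (i j : Fin (d+1)) (θ : ℝ) (k : Fin (d+1)) :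
    Continuous (fun t : EuclideanSpace ℝ (Fin (d+1)) => rotD i j θ (fun m => t m) k) := by
  unfold rotD
  split_ifs with h1 h2
  · exact (continuous_const.mul (cont_coord i)).sub (continuous_const.mul (cont_coord j))
  · exact (continuous_const.mul (cont_coord i)).sub (continuous_const.mul (cont_coord j))
  · exact continuous_const

lemma rotFun_zero (i j : Fin (d+1)) (t : Fin (d+1) → ℝ) (k : Fin (d+1)) :
    rotFun i j 0 t k = t k := by
  unfold rotFun
  split_ifs with h1 h2
  · rw [h1]; simp
  · rw [h2]; simp
  · rfl

lemma rotD_zero (i j : Fin (d+1)) (t : Fin (d+1) → ℝ) (k : Fin (d+1)) :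
    rotD i j 0 t k = (if k = i then -(t j) else if k = j then t i else 0) := by
  unfold rotD
  split_ifs with h1 h2
  · simp
  · simp
  · rfl

lemma integral_deriv_zero {d : ℕ} {r : ℝ} (hr : 0 < r) (x y : Fin (d+1) → ℝ)
    (i j : Fin (d+1)) (hij : i ≠ j) :
    ∫ t, ((2 * x i * t i + y i) * (-(t j)) + (2 * x j * t j + y j) * t i) * ex x y t
      ∂(smu d r) = 0 := by
  haveI := isFiniteMeasure_smu (d := d) hr
  set C1 : ℝ := ∑ k, (2*|x k| *(2*r) + |y k|) * (2*r) with hC1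
  set B1 : ℝ := ∑ k, (|x k| * (2*r)^2 + |y k| * (2*r)) with hB1
  set F : ℝ → EuclideanSpace ℝ (Fin (d+1)) → ℝ := fun θ t =>
    Real.exp (∑ k, (x k * rotFun i j θ (fun m => t m) k ^2
      + y k * rotFun i j θ (fun m => t m) k)) with hF
  set F' : ℝ → EuclideanSpace ℝ (Fin (d+1)) → ℝ := fun θ t =>
    (∑ k, (2 * x k * rotFun i j θ (fun m => t m) k + y k)
      * rotD i j θ (fun m => t m) k) * F θ t with hF'
  have hmem : ∀ᵐ t ∂(smu d r), t ∈ sphere (0 : EuclideanSpace ℝ (Fin (d+1))) r :=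
    ae_restrict_mem isClosed_sphere.measurableSet
  have hcontF : ∀ θ, Continuous (F θ) := fun θ =>
    Real.continuous_exp.comp (continuous_finset_sum _ fun k _ =>
      (continuous_const.mul ((cont_rotFun i j θ k).pow 2)).add
        (continuous_const.mul (cont_rotFun i j θ k)))
  have hFpos : ∀ θ t, 0 < F θ t := fun θ t => by rw [hF]; exact Real.exp_pos _
  have hboundF : ∀ θ, ∀ t ∈ sphere (0 : EuclideanSpace ℝ (Fin (d+1))) r,
      F θ t ≤ Real.exp B1 := by
    intro θ t ht
    rw [hF, hB1]
    exact Real.exp_le_exp.mpr (sum_quad_le x y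
      (fun k => rotFun_abs_le i j (fun m => abs_coord_sphere hr.le ht m) θ k))
  have hboundF' : ∀ θ, ∀ t ∈ sphere (0 : EuclideanSpace ℝ (Fin (d+1))) r,
      |F' θ t| ≤ C1 * Real.exp B1 := by
    intro θ t ht
    rw [hF', abs_mul]
    have habs : ∀ m, |t m| ≤ r := fun m => abs_coord_sphere hr.le ht m
    have h1 : |∑ k, (2 * x k * rotFun i j θ (fun m => t m) k + y k)
        * rotD i j θ (fun m => t m) k| ≤ C1 := by
      refine le_trans (Finset.abs_sum_le_sum_abs _ _) ?_
      rw [hC1]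
      refine Finset.sum_le_sum fun k _ => ?_
      rw [abs_mul]
      have h2 : |2 * x k * rotFun i j θ (fun m => t m) k + y k|
          ≤ 2*|x k| *(2*r) + |y k| := by
        refine le_trans (abs_add_le _ _) ?_
        have h3 : |2 * x k * rotFun i j θ (fun m => t m) k|
            = 2 * |x k| * |rotFun i j θ (fun m => t m) k| := by
          rw [abs_mul, abs_mul, abs_two]
        rw [h3]
        have h4 := rotFun_abs_le i j habs θ k
        have h5 : 2 * |x k| * |rotFun i j θ (fun m => t m) k| ≤ 2*|x k| *(2*r) :=
          mul_le_mul_of_nonneg_left h4 (by positivity)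
        linarith
      have h6 := rotD_abs_le i j habs θ k
      have h7 : 0 ≤ 2*|x k| *(2*r) + |y k| := le_trans (abs_nonneg _) h2
      exact mul_le_mul h2 h6 (abs_nonneg _) h7
    have h8 : |F θ t| ≤ Real.exp B1 := by
      rw [abs_of_pos (hFpos θ t)]
      exact hboundF θ t ht
    exact mul_le_mul h1 h8 (abs_nonneg _) (le_trans (abs_nonneg _) h1)
  have hderiv : ∀ θ t, HasDerivAt (fun ψ => F ψ t) (F' θ t) θ := by
    intro θ t
    have hterm : ∀ k : Fin (d+1), HasDerivAt
        (fun ψ => x k * rotFun i j ψ (fun m => t m) k ^2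
          + y k * rotFun i j ψ (fun m => t m) k)
        ((2 * x k * rotFun i j θ (fun m => t m) k + y k)
          * rotD i j θ (fun m => t m) k) θ := by
      intro k
      have hk := hasDerivAt_rotFun i j (fun m => t m) k θ
      have h9 := ((hk.pow 2).const_mul (x k)).fun_add (hk.const_mul (y k))
      refine h9.congr_deriv ?_
      push_cast
      ring
    have hsum := HasDerivAt.fun_sum (u := Finset.univ) (fun k _ => hterm k)
    have h10 := hsum.exp
    rw [hF, hF']
    convert h10 using 1
    ring
  have key := hasDerivAt_integral_of_dominated_loc_of_deriv_le
    (μ := smu d r) (F := F) (F' := F') (x₀ := 0)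
    (bound := fun _ => C1 * Real.exp B1) (s := Metric.ball 0 1) (Metric.ball_mem_nhds _ one_pos)
    (Filter.Eventually.of_forall fun θ => (hcontF θ).aestronglyMeasurable)
    (by
      refine Integrable.mono' (integrable_const (Real.exp B1))
        (hcontF 0).aestronglyMeasurable ?_
      filter_upwards [hmem] with t ht
      rw [Real.norm_eq_abs, abs_of_pos (hFpos 0 t)]
      exact hboundF 0 t ht)
    (((continuous_finset_sum _ fun k _ =>
        ((continuous_const.mul (cont_rotFun i j 0 k)).add continuous_const).mul
          (cont_rotD i j 0 k)).mul (hcontF 0)).aestronglyMeasurable)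
    (by
      filter_upwards [hmem] with t ht
      intro θ _
      rw [Real.norm_eq_abs]
      exact hboundF' θ t ht)
    (integrable_const _)
    (Filter.Eventually.of_forall fun t => fun θ _ => hderiv θ t)
  have hGconst : ∀ θ, (∫ t, F θ t ∂(smu d r)) = Ztilde d x y r := by
    intro θ
    have h7 : (fun t => F θ t) = fun t => ex x y (rot i j θ t) := rfl
    calc ∫ t, F θ t ∂(smu d r) = ∫ t, ex x y (rot i j θ t) ∂(smu d r) := by rw [h7]
      _ = ∫ t, ex x y t ∂(smu d r) := (integral_rot i j hij θ r (ex x y)).symm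
      _ = Ztilde d x y r := rfl
  have hG0 : HasDerivAt (fun θ => ∫ t, F θ t ∂(smu d r)) 0 0 := by
    rw [funext hGconst]
    exact hasDerivAt_const 0 _
  have hzero : (∫ t, F' 0 t ∂(smu d r)) = 0 := key.2.unique hG0
  have hfinal : (fun t : EuclideanSpace ℝ (Fin (d+1)) =>
      ((2 * x i * t i + y i) * (-(t j)) + (2 * x j * t j + y j) * t i) * ex x y t)
      = F' 0 := by
    funext t
    simp only [hF', hF]
    have hR0 : ∀ k, rotFun i j 0 (fun m => t m) k = t k := fun k => rotFun_zero i j _ k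
    have h5 : ∑ k, (2 * x k * rotFun i j 0 (fun m => t m) k + y k)
        * rotD i j 0 (fun m => t m) k
        = (2 * x i * t i + y i) * (-(t j)) + (2 * x j * t j + y j) * t i := by
      rw [Finset.sum_congr rfl (fun k _ => by rw [hR0 k, rotD_zero])]
      rw [← Finset.sum_subset (Finset.subset_univ {i,j}) ?vanish]
      · rw [Finset.sum_pair hij, if_pos rfl, if_neg hij.symm, if_pos rfl]
      case vanish =>
        intro k _ hk
        simp only [Finset.mem_insert, Finset.mem_singleton, not_or] at hk
        rw [if_neg hk.1, if_neg hk.2, mul_zero]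
    have h6 : ∑ k, (x k * rotFun i j 0 (fun m => t m) k ^2
        + y k * rotFun i j 0 (fun m => t m) k)
        = ∑ k, (x k * t k ^2 + y k * t k) := by
      refine Finset.sum_congr rfl fun k _ => by rw [hR0 k]
    rw [h5, h6]
    rfl
  rw [hfinal]
  exact hzero

end ZtildeAux
end

theorem Ztilde_Cij (d : ℕ) (hd : 1 ≤ d) (x y : Fin (d + 1) → ℝ)
    (r : ℝ) (hr : 0 < r) (i j : Fin (d + 1)) (hij : i < j) :
    2 * (x i - x j) * pd i (pd j (fun y' => Ztilde d x y' r)) y +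
        y i * pd j (fun y' => Ztilde d x y' r) y -
        y j * pd i (fun y' => Ztilde d x y' r) y = 0 := by
  have hij' : i ≠ j := ne_of_lt hij
  haveI := ZtildeAux.isFiniteMeasure_smu (d := d) hr
  rw [ZtildeAux.pd2_formula hr x y i j, ZtildeAux.pd_formula hr x y j,
    ZtildeAux.pd_formula hr x y i]
  have Iij : Integrable (fun t => t i * t j * ZtildeAux.ex x y t) (ZtildeAux.smu d r) :=
    ZtildeAux.integrable_weight hr x y (fun t => t i * t j)
      ((ZtildeAux.cont_coord i).mul (ZtildeAux.cont_coord j)) (r*r)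
      (fun t ht => by
        rw [abs_mul]
        exact mul_le_mul (ZtildeAux.abs_coord_sphere hr.le ht i)
          (ZtildeAux.abs_coord_sphere hr.le ht j) (abs_nonneg _) hr.le)
  have Ii : Integrable (fun t => t i * ZtildeAux.ex x y t) (ZtildeAux.smu d r) :=
    ZtildeAux.integrable_weight hr x y (fun t => t i) (ZtildeAux.cont_coord i) r
      (fun t ht => ZtildeAux.abs_coord_sphere hr.le ht i)
  have Ij : Integrable (fun t => t j * ZtildeAux.ex x y t) (ZtildeAux.smu d r) :=
    ZtildeAux.integrable_weight hr x y (fun t => t j) (ZtildeAux.cont_coord j) r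
      (fun t ht => ZtildeAux.abs_coord_sphere hr.le ht j)
  rw [← MeasureTheory.integral_const_mul, ← MeasureTheory.integral_const_mul,
    ← MeasureTheory.integral_const_mul]
  rw [← MeasureTheory.integral_add (Iij.const_mul _) (Ij.const_mul _)]
  have hfg : Integrable (fun t : EuclideanSpace ℝ (Fin (d+1)) =>
      2 * (x i - x j) * (t i * t j * ZtildeAux.ex x y t)
        + y i * (t j * ZtildeAux.ex x y t)) (ZtildeAux.smu d r) :=
    (Iij.const_mul _).add (Ij.const_mul _)
  rw [← MeasureTheory.integral_sub hfg (Ii.const_mul _)]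
  have hcomb : (fun t : EuclideanSpace ℝ (Fin (d+1)) =>
      2 * (x i - x j) * (t i * t j * ZtildeAux.ex x y t)
        + y i * (t j * ZtildeAux.ex x y t) - y j * (t i * ZtildeAux.ex x y t))
      = fun t => -(((2 * x i * t i + y i) * (-(t j)) + (2 * x j * t j + y j) * t i)
          * ZtildeAux.ex x y t) := by
    funext t; ring
  rw [hcomb, integral_neg, ZtildeAux.integral_deriv_zero hr x y i j hij', neg_zero]
end

section
/- The Euler-type radial equation: the function Z̃(x,y,r) = ∫_{S^d(r)} exp(∑_i (x_i t_i² + y_i t_i)) |dt| satisfies r ∂Z̃/∂r = 2 ∑_{i=1}^{d+1} x_i ∂²Z̃/∂y_i² + ∑_{i=1}^{d+1} y_i ∂Z̃/∂y_i + d·Z̃. -/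
open MeasureTheory Metric Set
open scoped ENNReal NNReal Pointwise

lemma abs_coord_le_norm {n : ℕ} (x : EuclideanSpace ℝ (Fin n)) (i : Fin n) : |x i| ≤ ‖x‖ := by
  rw [EuclideanSpace.norm_eq, ← Real.sqrt_sq_eq_abs]
  apply Real.sqrt_le_sqrt
  calc (x i)^2 = ‖x i‖^2 := by rw [Real.norm_eq_abs, sq_abs]
  _ ≤ ∑ j, ‖x j‖^2 :=
    Finset.single_le_sum (f := fun j => ‖x j‖^2) (fun j _ => sq_nonneg _) (Finset.mem_univ i)

lemma lipschitzOnWith_normalize {F : Type*} [NormedAddCommGroup F] [NormedSpace ℝ F] :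
    LipschitzOnWith 2 (fun x : F => ‖x‖⁻¹ • x) {x | 1 ≤ ‖x‖} := by
  apply LipschitzOnWith.of_dist_le_mul
  intro p hp q hq
  simp only [mem_setOf_eq] at hp hq
  have hp0 : (0:ℝ) < ‖p‖ := lt_of_lt_of_le one_pos hp
  have hq0 : (0:ℝ) < ‖q‖ := lt_of_lt_of_le one_pos hq
  rw [dist_eq_norm, dist_eq_norm]
  have key : ‖p‖⁻¹ • p - ‖q‖⁻¹ • q = ‖p‖⁻¹ • (p - q) + (‖p‖⁻¹ - ‖q‖⁻¹) • q := by
    rw [smul_sub, sub_smul]; abel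
  have habs : |‖p‖⁻¹ - ‖q‖⁻¹| = |‖q‖ - ‖p‖| * (‖p‖⁻¹ * ‖q‖⁻¹) := by
    rw [← abs_of_pos (show (0:ℝ) < ‖p‖⁻¹ * ‖q‖⁻¹ by positivity), ← abs_mul]
    congr 1
    field_simp
  have hnn : |‖q‖ - ‖p‖| ≤ ‖p - q‖ := by
    rw [abs_sub_comm]; exact abs_norm_sub_norm_le p q
  calc ‖‖p‖⁻¹ • p - ‖q‖⁻¹ • q‖ ≤ ‖‖p‖⁻¹ • (p - q)‖ + ‖(‖p‖⁻¹ - ‖q‖⁻¹) • q‖ := by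
        rw [key]; exact norm_add_le _ _
    _ = ‖p‖⁻¹ * ‖p - q‖ + |‖p‖⁻¹ - ‖q‖⁻¹| * ‖q‖ := by
        rw [norm_smul, norm_smul, Real.norm_eq_abs, Real.norm_eq_abs,
          abs_of_pos (show (0:ℝ) < ‖p‖⁻¹ by positivity)]
    _ ≤ 2 * ‖p - q‖ := by
        rw [habs]
        have h1 : ‖p‖⁻¹ ≤ 1 := by
          rw [inv_le_one_iff₀]; right; exact hp
        have h2 : ‖q‖⁻¹ * ‖q‖ = 1 := inv_mul_cancel₀ (ne_of_gt hq0)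
        have h3 : (0:ℝ) ≤ ‖p - q‖ := norm_nonneg _
        have h4 : (0:ℝ) ≤ |‖q‖ - ‖p‖| := abs_nonneg _
        have h5 : (0:ℝ) < ‖p‖⁻¹ := by positivity
        have e1 : ‖p‖⁻¹ * ‖p - q‖ ≤ 1 * ‖p - q‖ := mul_le_mul_of_nonneg_right h1 h3
        have e2 : |‖q‖ - ‖p‖| * (‖p‖⁻¹ * ‖q‖⁻¹) * ‖q‖ = |‖q‖ - ‖p‖| * ‖p‖⁻¹ := by
          field_simp
        have e3 : |‖q‖ - ‖p‖| * ‖p‖⁻¹ ≤ ‖p - q‖ * 1 := mul_le_mul hnn h1 (le_of_lt h5) h3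
        rw [e2]
        linarith

lemma insert_lipschitz (d : ℕ) (i : Fin (d+1)) (c : ℝ) :
    ∃ K : NNReal, LipschitzWith K
      (fun u : Fin d → ℝ => (WithLp.equiv 2 (Fin (d+1) → ℝ)).symm (i.insertNth c u)) := by
  have h1 : LipschitzWith 1 (fun u : Fin d → ℝ =>
      (Fin.insertNth (α := fun _ => ℝ) i c u)) := by
    apply LipschitzWith.of_dist_le_mul
    intro u v
    rw [NNReal.coe_one, one_mul, dist_pi_le_iff dist_nonneg]
    intro j
    refine Fin.succAboveCases
      (α := fun j => dist (Fin.insertNth (α := fun _ => ℝ) i c u j)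
        (Fin.insertNth (α := fun _ => ℝ) i c v j) ≤ dist u v) i ?_ ?_ j
    · simp [Fin.insertNth_apply_same, dist_nonneg]
    · intro k
      simp only [Fin.insertNth_apply_succAbove]
      exact dist_le_pi_dist u v k
  have h2 := PiLp.antilipschitzWith_ofLp 2 (fun _ : Fin (d+1) => ℝ)
  have h3 := h2.to_rightInverse (WithLp.equiv 2 (Fin (d+1) → ℝ)).right_inv
  exact ⟨_, h3.comp h1⟩

lemma sphere_hausdorff_lt_top (d : ℕ) (hd : 1 ≤ d) :
    μH[(d:ℝ)] (Metric.sphere (0 : EuclideanSpace ℝ (Fin (d+1))) 1) < ⊤ := by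
  classical
  have hvol : (μH[(d:ℝ)] : Measure (Fin d → ℝ)) = volume := by
    have := hausdorffMeasure_pi_real (ι := Fin d)
    simpa using this
  set g : EuclideanSpace ℝ (Fin (d+1)) → EuclideanSpace ℝ (Fin (d+1)) :=
    fun x => ‖x‖⁻¹ • x with hg
  set h : Fin (d+1) × Bool → (Fin d → ℝ) → EuclideanSpace ℝ (Fin (d+1)) :=
    fun p u => (WithLp.equiv 2 (Fin (d+1) → ℝ)).symm
      (p.1.insertNth (if p.2 then (1:ℝ) else -1) u) with hh
  have cover : Metric.sphere (0 : EuclideanSpace ℝ (Fin (d+1))) 1 ⊆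
      ⋃ p : Fin (d+1) × Bool, g '' (h p '' Metric.closedBall 0 1) := by
    intro u hu
    rw [mem_sphere_zero_iff_norm] at hu
    obtain ⟨i, -, hmax⟩ := Finset.exists_max_image Finset.univ (fun j => |u j|)
      ⟨0, Finset.mem_univ 0⟩
    set m : ℝ := |u i| with hm
    have hmax' : ∀ j, |u j| ≤ m := fun j => hmax j (Finset.mem_univ j)
    have hm0 : 0 < m := by
      rcases lt_or_ge 0 m with h | h
      · exact h
      · exfalso
        have hz : ∀ j, u j = 0 := fun j =>
          abs_eq_zero.mp (le_antisymm (le_trans (hmax' j) h) (abs_nonneg _))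
        have : u = 0 := PiLp.ext hz
        rw [this, norm_zero] at hu
        exact one_ne_zero hu.symm
    set x : EuclideanSpace ℝ (Fin (d+1)) := m⁻¹ • u with hx
    have hxj : ∀ j, x j = m⁻¹ * u j := fun j => rfl
    have hxi : x i = if (0:ℝ) ≤ u i then (1:ℝ) else -1 := by
      rw [hxj i]
      split_ifs with h0
      · have hne : u i ≠ 0 := fun hz => by rw [hm, hz, abs_zero] at hm0; exact lt_irrefl 0 hm0
        rw [hm, abs_of_nonneg h0]
        exact inv_mul_cancel₀ hne
      · have hlt : u i < 0 := lt_of_not_ge h0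
        rw [hm, abs_of_neg hlt, inv_neg, neg_mul, inv_mul_cancel₀ (ne_of_lt hlt)]
    refine mem_iUnion.2 ⟨(i, decide ((0:ℝ) ≤ u i)), ?_⟩
    refine ⟨x, ⟨fun k => x (i.succAbove k), ?_, ?_⟩, ?_⟩
    · rw [Metric.mem_closedBall, dist_zero_right]
      rw [pi_norm_le_iff_of_nonneg zero_le_one]
      intro k
      rw [Real.norm_eq_abs, hxj, abs_mul, abs_inv, abs_of_pos hm0]
      calc m⁻¹ * |u (i.succAbove k)| ≤ m⁻¹ * m :=
        mul_le_mul_of_nonneg_left (hmax' _) (by positivity)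
      _ = 1 := inv_mul_cancel₀ (ne_of_gt hm0)
    · show (WithLp.equiv 2 (Fin (d+1) → ℝ)).symm
        (i.insertNth (if decide ((0:ℝ) ≤ u i) then (1:ℝ) else -1) (fun k => x (i.succAbove k))) = x
      have hb : (if decide ((0:ℝ) ≤ u i) then (1:ℝ) else -1) = x i := by
        rw [hxi]; simp
      rw [hb]
      have : i.insertNth (x i) (fun k => x (i.succAbove k)) = WithLp.equiv 2 (Fin (d+1) → ℝ) x :=
        i.insertNth_self_removeNth _
      rw [this, Equiv.symm_apply_apply]
    · show ‖x‖⁻¹ • x = u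
      have hnx : ‖x‖ = m⁻¹ := by
        rw [hx, norm_smul, Real.norm_eq_abs, abs_inv, abs_of_pos hm0, hu, mul_one]
      rw [hnx, inv_inv, hx, smul_inv_smul₀ (ne_of_gt hm0)]
  refine lt_of_le_of_lt ((measure_mono cover).trans (measure_iUnion_le _)) ?_
  rw [tsum_fintype]
  refine ENNReal.sum_lt_top.mpr ?_
  intro p _
  obtain ⟨K, hK⟩ := insert_lipschitz d p.1 (if p.2 then (1:ℝ) else -1)
  have hsub : h p '' Metric.closedBall 0 1 ⊆
      {x : EuclideanSpace ℝ (Fin (d+1)) | 1 ≤ ‖x‖} := by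
    rintro _ ⟨u, -, rfl⟩
    have hcoord : (h p u) p.1 = (if p.2 then (1:ℝ) else -1) := by
      show ((WithLp.equiv 2 (Fin (d+1) → ℝ)).symm (p.1.insertNth _ u)) p.1 = _
      rw [WithLp.equiv_symm_apply, PiLp.toLp_apply, Fin.insertNth_apply_same]
    have hle := abs_coord_le_norm (h p u) p.1
    rw [hcoord] at hle
    have h1 : (1:ℝ) ≤ |if p.2 then (1:ℝ) else -1| := by split_ifs <;> simp
    exact le_trans h1 hle
  have lipg : LipschitzOnWith 2 g (h p '' Metric.closedBall 0 1) :=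
    lipschitzOnWith_normalize.mono hsub
  have b1 : μH[(d:ℝ)] (g '' (h p '' Metric.closedBall 0 1)) ≤
      ((2:ℝ≥0) : ℝ≥0∞)^(d:ℝ) * μH[(d:ℝ)] (h p '' Metric.closedBall 0 1) :=
    lipg.hausdorffMeasure_image_le (by positivity)
  have b2 : μH[(d:ℝ)] (h p '' Metric.closedBall 0 1) ≤
      (K:ℝ≥0∞)^(d:ℝ) * μH[(d:ℝ)] (Metric.closedBall (0 : Fin d → ℝ) 1) :=
    hK.hausdorffMeasure_image_le (by positivity) _
  have b3 : μH[(d:ℝ)] (Metric.closedBall (0 : Fin d → ℝ) 1) < ⊤ := by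
    rw [hvol]; exact measure_closedBall_lt_top
  have hfin2 : μH[(d:ℝ)] (h p '' Metric.closedBall 0 1) < ⊤ :=
    lt_of_le_of_lt b2 (ENNReal.mul_lt_top
      (ENNReal.rpow_lt_top_of_nonneg (by positivity) ENNReal.coe_ne_top) b3)
  have := lt_of_le_of_lt b1 (ENNReal.mul_lt_top
    (ENNReal.rpow_lt_top_of_nonneg (by positivity) ENNReal.coe_ne_top) hfin2)
  exact this

lemma restrict_sphere_smul (d : ℕ) {r : ℝ} (hr : 0 < r) :
    (μH[(d:ℝ)] : Measure (EuclideanSpace ℝ (Fin (d+1)))).restrict (Metric.sphere 0 r) =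
      ((‖r‖₊ ^ (d:ℝ) : ℝ≥0) : ℝ≥0∞) •
        Measure.map (fun s : EuclideanSpace ℝ (Fin (d+1)) => r • s)
          (μH[(d:ℝ)].restrict (Metric.sphere 0 1)) := by
  have hmeas : Measurable (fun s : EuclideanSpace ℝ (Fin (d+1)) => r • s) :=
    (continuous_const_smul r).measurable
  ext A hA
  rw [Measure.smul_apply, Measure.map_apply hmeas hA, Measure.restrict_apply hA,
    Measure.restrict_apply (hmeas hA)]
  have hset : (fun s : EuclideanSpace ℝ (Fin (d+1)) => r • s) ⁻¹' A ∩ Metric.sphere 0 1 =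
      r⁻¹ • (A ∩ Metric.sphere 0 r) := by
    ext z
    simp only [Set.mem_inter_iff, Set.mem_preimage, mem_sphere_zero_iff_norm,
      Set.mem_smul_set_iff_inv_smul_mem₀ (inv_ne_zero (ne_of_gt hr)), inv_inv]
    have hnr : ‖r • z‖ = r * ‖z‖ := by
      rw [norm_smul, Real.norm_eq_abs, abs_of_pos hr]
    constructor
    · rintro ⟨hz1, hz2⟩
      exact ⟨hz1, by rw [hnr, hz2, mul_one]⟩
    · rintro ⟨hz1, hz2⟩
      refine ⟨hz1, ?_⟩
      rw [hnr] at hz2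
      field_simp at hz2
      exact hz2
  rw [hset, Measure.hausdorffMeasure_smul₀ (by positivity) (inv_ne_zero (ne_of_gt hr))]
  have hab : (‖r‖₊ ^ (d:ℝ)) * (‖r⁻¹‖₊ ^ (d:ℝ)) = 1 := by
    rw [← NNReal.mul_rpow, nnnorm_inv, mul_inv_cancel₀ (by simpa using ne_of_gt hr),
      NNReal.one_rpow]
  rw [smul_eq_mul, ENNReal.smul_def, smul_eq_mul, ← mul_assoc, ← ENNReal.coe_mul, hab,
    ENNReal.coe_one, one_mul]

lemma sphere_r_hausdorff_lt_top (d : ℕ) (hd : 1 ≤ d) {r : ℝ} (hr : 0 < r) :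
    μH[(d:ℝ)] (Metric.sphere (0 : EuclideanSpace ℝ (Fin (d+1))) r) < ⊤ := by
  have hmeas : Measurable (fun s : EuclideanSpace ℝ (Fin (d+1)) => r • s) :=
    (continuous_const_smul r).measurable
  have h := congrArg (fun μ : Measure (EuclideanSpace ℝ (Fin (d+1))) => μ Set.univ)
    (restrict_sphere_smul d hr)
  simp only [Measure.restrict_apply_univ, Measure.smul_apply,
    Measure.map_apply hmeas MeasurableSet.univ, Set.preimage_univ] at h
  rw [h]
  exact ENNReal.mul_lt_top ENNReal.coe_lt_top (sphere_hausdorff_lt_top d hd)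

lemma integral_sphere_smul (d : ℕ) {r : ℝ} (hr : 0 < r)
    (f : EuclideanSpace ℝ (Fin (d+1)) → ℝ) :
    ∫ t in Metric.sphere (0 : EuclideanSpace ℝ (Fin (d+1))) r, f t ∂μH[(d:ℝ)] =
      r ^ d * ∫ s in Metric.sphere (0 : EuclideanSpace ℝ (Fin (d+1))) 1,
        f (r • s) ∂μH[(d:ℝ)] := by
  have hemb : MeasurableEmbedding (fun s : EuclideanSpace ℝ (Fin (d+1)) => r • s) :=
    (Homeomorph.smulOfNeZero r (ne_of_gt hr)).measurableEmbedding
  rw [restrict_sphere_smul d hr, integral_smul_measure, hemb.integral_map, smul_eq_mul]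
  congr 1
  rw [ENNReal.coe_toReal, NNReal.coe_rpow, coe_nnnorm, Real.norm_eq_abs, abs_of_pos hr,
    Real.rpow_natCast]

lemma integrable_sphere_of_continuous (d : ℕ) (hd : 1 ≤ d) {R : ℝ} (hR : 0 < R)
    (f : EuclideanSpace ℝ (Fin (d+1)) → ℝ) (hf : Continuous f) :
    Integrable f (μH[(d:ℝ)].restrict (Metric.sphere 0 R)) := by
  haveI : IsFiniteMeasure (μH[(d:ℝ)].restrict
      (Metric.sphere (0 : EuclideanSpace ℝ (Fin (d+1))) R)) :=
    ⟨by rw [Measure.restrict_apply_univ]; exact sphere_r_hausdorff_lt_top d hd hR⟩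
  obtain ⟨C, hC⟩ := (isCompact_sphere (0 : EuclideanSpace ℝ (Fin (d+1))) R).exists_bound_of_continuousOn
    hf.continuousOn
  refine Integrable.mono' (integrable_const C) hf.aestronglyMeasurable ?_
  exact (ae_restrict_mem Metric.isClosed_sphere.measurableSet).mono fun t ht => hC t ht

lemma hasDerivAt_integral_sphere (d : ℕ) (hd : 1 ≤ d) {R : ℝ} (hR : 0 < R)
    (F F' : ℝ → EuclideanSpace ℝ (Fin (d+1)) → ℝ)
    (hF : Continuous fun p : ℝ × EuclideanSpace ℝ (Fin (d+1)) => F p.1 p.2)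
    (hF' : Continuous fun p : ℝ × EuclideanSpace ℝ (Fin (d+1)) => F' p.1 p.2)
    (hderiv : ∀ a t, HasDerivAt (fun b => F b t) (F' a t) a) (a₀ : ℝ) :
    HasDerivAt
      (fun a => ∫ t in Metric.sphere (0 : EuclideanSpace ℝ (Fin (d+1))) R, F a t ∂μH[(d:ℝ)])
      (∫ t in Metric.sphere (0 : EuclideanSpace ℝ (Fin (d+1))) R, F' a₀ t ∂μH[(d:ℝ)]) a₀ := by
  haveI : IsFiniteMeasure (μH[(d:ℝ)].restrict
      (Metric.sphere (0 : EuclideanSpace ℝ (Fin (d+1))) R)) :=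
    ⟨by rw [Measure.restrict_apply_univ]; exact sphere_r_hausdorff_lt_top d hd hR⟩
  have hFa : ∀ a, Continuous (F a) := fun a => hF.comp (Continuous.prodMk_right a)
  have hF'a : ∀ a, Continuous (F' a) := fun a => hF'.comp (Continuous.prodMk_right a)
  obtain ⟨C, hC⟩ := (((isCompact_closedBall a₀ 1).prod
    (isCompact_sphere (0 : EuclideanSpace ℝ (Fin (d+1))) R)).exists_bound_of_continuousOn
      hF'.continuousOn)
  have hmem : ∀ᵐ t ∂(μH[(d:ℝ)].restrict (Metric.sphere (0 : EuclideanSpace ℝ (Fin (d+1))) R)),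
      t ∈ Metric.sphere (0 : EuclideanSpace ℝ (Fin (d+1))) R :=
    ae_restrict_mem Metric.isClosed_sphere.measurableSet
  have key := hasDerivAt_integral_of_dominated_loc_of_deriv_le (s := Metric.ball a₀ 1)
    (x₀ := a₀) (bound := fun _ => C) (Metric.ball_mem_nhds a₀ one_pos)
    (Filter.Eventually.of_forall fun a => (hFa a).aestronglyMeasurable)
    (integrable_sphere_of_continuous d hd hR (F a₀) (hFa a₀))
    ((hF'a a₀).aestronglyMeasurable)
    (hmem.mono fun t ht a ha => hC (a, t) ⟨Metric.ball_subset_closedBall ha, ht⟩)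
    (integrable_const C)
    (Filter.Eventually.of_forall fun t a _ => hderiv a t)
  exact key.2

lemma update_sum_eq (d : ℕ) (x y : Fin (d+1) → ℝ) (i : Fin (d+1)) (a : ℝ)
    (t : EuclideanSpace ℝ (Fin (d+1))) :
    ∑ j, (x j * t j ^ 2 + Function.update y i a j * t j) =
      (∑ j, (x j * t j ^ 2 + y j * t j)) + (a - y i) * t i := by
  have h : ∀ j : Fin (d+1), x j * t j ^ 2 + Function.update y i a j * t j =
      (x j * t j ^ 2 + y j * t j) + (if j = i then (a - y i) * t i else 0) := by
    intro j
    rcases eq_or_ne j i with rfl | hj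
    · simp [Function.update_self]; ring
    · simp [Function.update_of_ne hj, if_neg hj]
  rw [Finset.sum_congr rfl (fun j _ => h j), Finset.sum_add_distrib,
    Finset.sum_ite_eq' Finset.univ i fun _ => (a - y i) * t i]
  simp

lemma continuous_coord (d : ℕ) (i : Fin (d+1)) :
    Continuous fun t : EuclideanSpace ℝ (Fin (d+1)) => t i :=
  (EuclideanSpace.proj (𝕜 := ℝ) i).continuous

noncomputable def Bsum (d : ℕ) (x y : Fin (d+1) → ℝ) (t : EuclideanSpace ℝ (Fin (d+1))) : ℝ :=
  ∑ j, (x j * t j ^ 2 + y j * t j)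

lemma Bsum_update (d : ℕ) (x y : Fin (d+1) → ℝ) (i : Fin (d+1)) (a : ℝ)
    (t : EuclideanSpace ℝ (Fin (d+1))) :
    Bsum d x (Function.update y i a) t = Bsum d x y t + (a - y i) * t i :=
  update_sum_eq d x y i a t

lemma Bsum_continuous (d : ℕ) (x y : Fin (d+1) → ℝ) : Continuous (Bsum d x y) :=
  continuous_finset_sum _ fun j _ =>
    (continuous_const.mul ((continuous_coord d j).pow 2)).add
      (continuous_const.mul (continuous_coord d j))

lemma pd_Ztilde (d : ℕ) (hd : 1 ≤ d) (x y : Fin (d+1) → ℝ) {r : ℝ} (hr : 0 < r)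
    (i : Fin (d+1)) :
    pd i (fun y' => Ztilde d x y' r) y =
      (∫ t in Metric.sphere (0 : EuclideanSpace ℝ (Fin (d+1))) r,
        t i * Real.exp (Bsum d x y t) ∂μH[(d:ℝ)]) ∧
    pd i (pd i (fun y' => Ztilde d x y' r)) y =
      ∫ t in Metric.sphere (0 : EuclideanSpace ℝ (Fin (d+1))) r,
        t i ^ 2 * Real.exp (Bsum d x y t) ∂μH[(d:ℝ)] := by
  have hcoord := continuous_coord d
  have hBc := Bsum_continuous d x y
  have hinner : ∀ (t : EuclideanSpace ℝ (Fin (d+1))) (a : ℝ),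
      HasDerivAt (fun b => Bsum d x y t + (b - y i) * t i) (t i) a := by
    intro t a
    have h := (((hasDerivAt_id a).sub_const (y i)).mul_const (t i)).const_add (Bsum d x y t)
    simpa using h
  have hFc : Continuous fun p : ℝ × EuclideanSpace ℝ (Fin (d+1)) =>
      Real.exp (Bsum d x y p.2 + (p.1 - y i) * p.2 i) :=
    Real.continuous_exp.comp ((hBc.comp continuous_snd).add
      ((continuous_fst.sub continuous_const).mul ((hcoord i).comp continuous_snd)))
  have hF'c : Continuous fun p : ℝ × EuclideanSpace ℝ (Fin (d+1)) =>
      p.2 i * Real.exp (Bsum d x y p.2 + (p.1 - y i) * p.2 i) :=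
    ((hcoord i).comp continuous_snd).mul hFc
  have hF''c : Continuous fun p : ℝ × EuclideanSpace ℝ (Fin (d+1)) =>
      p.2 i ^ 2 * Real.exp (Bsum d x y p.2 + (p.1 - y i) * p.2 i) :=
    (((hcoord i).comp continuous_snd).pow 2).mul hFc
  have hG : ∀ a, HasDerivAt
      (fun a' => ∫ t in Metric.sphere (0 : EuclideanSpace ℝ (Fin (d+1))) r,
        Real.exp (Bsum d x y t + (a' - y i) * t i) ∂μH[(d:ℝ)])
      (∫ t in Metric.sphere (0 : EuclideanSpace ℝ (Fin (d+1))) r,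
        t i * Real.exp (Bsum d x y t + (a - y i) * t i) ∂μH[(d:ℝ)]) a := by
    intro a
    refine hasDerivAt_integral_sphere d hd hr
      (fun a' t => Real.exp (Bsum d x y t + (a' - y i) * t i))
      (fun a' t => t i * Real.exp (Bsum d x y t + (a' - y i) * t i)) hFc hF'c ?_ a
    intro a t
    simpa [mul_comm] using (hinner t a).exp
  have hG1 : ∀ a, HasDerivAt
      (fun a' => ∫ t in Metric.sphere (0 : EuclideanSpace ℝ (Fin (d+1))) r,
        t i * Real.exp (Bsum d x y t + (a' - y i) * t i) ∂μH[(d:ℝ)])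
      (∫ t in Metric.sphere (0 : EuclideanSpace ℝ (Fin (d+1))) r,
        t i ^ 2 * Real.exp (Bsum d x y t + (a - y i) * t i) ∂μH[(d:ℝ)]) a := by
    intro a
    refine hasDerivAt_integral_sphere d hd hr
      (fun a' t => t i * Real.exp (Bsum d x y t + (a' - y i) * t i))
      (fun a' t => t i ^ 2 * Real.exp (Bsum d x y t + (a' - y i) * t i)) hF'c hF''c ?_ a
    intro a t
    have h2 := ((hinner t a).exp).const_mul (t i)
    exact h2.congr_deriv (by ring)
  have hZeq : ∀ a, Ztilde d x (Function.update y i a) r =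
      ∫ t in Metric.sphere (0 : EuclideanSpace ℝ (Fin (d+1))) r,
        Real.exp (Bsum d x y t + (a - y i) * t i) ∂μH[(d:ℝ)] := by
    intro a
    unfold Ztilde
    exact integral_congr_ae (Filter.Eventually.of_forall fun t => by
      show Real.exp (Bsum d x (Function.update y i a) t) = _
      rw [Bsum_update])
  constructor
  · show deriv (fun a => Ztilde d x (Function.update y i a) r) (y i) = _
    rw [funext hZeq, (hG (y i)).deriv]
    simp
  · show deriv (fun a => pd i (fun y' => Ztilde d x y' r) (Function.update y i a)) (y i) = _
    have hpda : ∀ a, pd i (fun y' => Ztilde d x y' r) (Function.update y i a) =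
        ∫ t in Metric.sphere (0 : EuclideanSpace ℝ (Fin (d+1))) r,
          t i * Real.exp (Bsum d x y t + (a - y i) * t i) ∂μH[(d:ℝ)] := by
      intro a
      show deriv (fun b => Ztilde d x (Function.update (Function.update y i a) i b) r)
        ((Function.update y i a) i) = _
      simp only [Function.update_idem, Function.update_self]
      rw [funext hZeq]
      exact (hG a).deriv
    rw [funext hpda, (hG1 (y i)).deriv]
    simp

lemma Ztilde_eq_scaled (d : ℕ) (x y : Fin (d+1) → ℝ) {ρ : ℝ} (hρ : 0 < ρ) :
    Ztilde d x y ρ = ρ ^ d * ∫ s in Metric.sphere (0 : EuclideanSpace ℝ (Fin (d+1))) 1,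
      Real.exp (∑ i, (x i * (ρ * s i) ^ 2 + y i * (ρ * s i))) ∂μH[(d:ℝ)] := by
  unfold Ztilde
  rw [integral_sphere_smul d hρ (fun t => Real.exp (∑ i, (x i * t i ^ 2 + y i * t i)))]
  rfl

theorem Ztilde_euler_radial (d : ℕ) (hd : 1 ≤ d) (x y : Fin (d + 1) → ℝ)
    (r : ℝ) (hr : 0 < r) :
    r * deriv (fun s => Ztilde d x y s) r =
      2 * ∑ i, x i * pd i (pd i (fun y' => Ztilde d x y' r)) y +
        ∑ i, y i * pd i (fun y' => Ztilde d x y' r) y +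
        d * Ztilde d x y r := by
  classical
  have hcoord := continuous_coord d
  have hBc := Bsum_continuous d x y
  have hexpc : Continuous fun t : EuclideanSpace ℝ (Fin (d+1)) => Real.exp (Bsum d x y t) :=
    Real.continuous_exp.comp hBc
  have hpd := fun i : Fin (d+1) => pd_Ztilde d hd x y hr i
  have hInt1 : ∀ i : Fin (d+1), Integrable (fun t : EuclideanSpace ℝ (Fin (d+1)) =>
      t i ^ 2 * Real.exp (Bsum d x y t)) (μH[(d:ℝ)].restrict (Metric.sphere 0 r)) :=
    fun i => integrable_sphere_of_continuous d hd hr _ (((hcoord i).pow 2).mul hexpc)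
  have hInt2 : ∀ i : Fin (d+1), Integrable (fun t : EuclideanSpace ℝ (Fin (d+1)) =>
      t i * Real.exp (Bsum d x y t)) (μH[(d:ℝ)].restrict (Metric.sphere 0 r)) :=
    fun i => integrable_sphere_of_continuous d hd hr _ ((hcoord i).mul hexpc)
  -- RHS
  have hRHS : 2 * ∑ i, x i * pd i (pd i (fun y' => Ztilde d x y' r)) y +
      ∑ i, y i * pd i (fun y' => Ztilde d x y' r) y =
      ∫ t in Metric.sphere (0 : EuclideanSpace ℝ (Fin (d+1))) r,
        (∑ i, (2 * x i * t i ^ 2 + y i * t i)) * Real.exp (Bsum d x y t) ∂μH[(d:ℝ)] := by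
    have e1 : ∀ t : EuclideanSpace ℝ (Fin (d+1)),
        (∑ i, (2 * x i * t i ^ 2 + y i * t i)) * Real.exp (Bsum d x y t) =
        ∑ i, (2 * x i * (t i ^ 2 * Real.exp (Bsum d x y t)) +
          y i * (t i * Real.exp (Bsum d x y t))) := by
      intro t
      rw [Finset.sum_mul]
      exact Finset.sum_congr rfl fun j _ => by ring
    have step1 : (∫ t in Metric.sphere (0 : EuclideanSpace ℝ (Fin (d+1))) r,
        (∑ i, (2 * x i * t i ^ 2 + y i * t i)) * Real.exp (Bsum d x y t) ∂μH[(d:ℝ)]) =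
        ∫ t in Metric.sphere (0 : EuclideanSpace ℝ (Fin (d+1))) r,
          ∑ i, (2 * x i * (t i ^ 2 * Real.exp (Bsum d x y t)) +
            y i * (t i * Real.exp (Bsum d x y t))) ∂μH[(d:ℝ)] :=
      integral_congr_ae (Filter.Eventually.of_forall e1)
    have step2 : (∫ t in Metric.sphere (0 : EuclideanSpace ℝ (Fin (d+1))) r,
        ∑ i, (2 * x i * (t i ^ 2 * Real.exp (Bsum d x y t)) +
          y i * (t i * Real.exp (Bsum d x y t))) ∂μH[(d:ℝ)]) =
        ∑ i : Fin (d+1), ∫ t in Metric.sphere (0 : EuclideanSpace ℝ (Fin (d+1))) r,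
          (2 * x i * (t i ^ 2 * Real.exp (Bsum d x y t)) +
            y i * (t i * Real.exp (Bsum d x y t))) ∂μH[(d:ℝ)] :=
      integral_finset_sum Finset.univ
        (fun i _ => ((hInt1 i).const_mul _).add ((hInt2 i).const_mul _))
    have step3 : ∀ j : Fin (d+1),
        (∫ t in Metric.sphere (0 : EuclideanSpace ℝ (Fin (d+1))) r,
          (2 * x j * (t j ^ 2 * Real.exp (Bsum d x y t)) +
            y j * (t j * Real.exp (Bsum d x y t))) ∂μH[(d:ℝ)]) =
        2 * x j * pd j (pd j (fun y' => Ztilde d x y' r)) y +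
          y j * pd j (fun y' => Ztilde d x y' r) y := by
      intro j
      rw [integral_add ((hInt1 j).const_mul _) ((hInt2 j).const_mul _),
        integral_const_mul, integral_const_mul, (hpd j).1, (hpd j).2]
    rw [step1, step2, Finset.sum_congr rfl fun j _ => step3 j, Finset.sum_add_distrib,
      Finset.mul_sum]
    congr 1
    exact Finset.sum_congr rfl fun j _ => by ring
  -- radial derivative
  have hFc : Continuous fun p : ℝ × EuclideanSpace ℝ (Fin (d+1)) =>
      Real.exp (∑ i, (x i * (p.1 * p.2 i) ^ 2 + y i * (p.1 * p.2 i))) := by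
    refine Real.continuous_exp.comp (continuous_finset_sum _ fun j _ => ?_)
    exact (continuous_const.mul
        ((continuous_fst.mul ((hcoord j).comp continuous_snd)).pow 2)).add
      (continuous_const.mul (continuous_fst.mul ((hcoord j).comp continuous_snd)))
  have hF'c : Continuous fun p : ℝ × EuclideanSpace ℝ (Fin (d+1)) =>
      (∑ i, (2 * x i * p.1 * p.2 i ^ 2 + y i * p.2 i)) *
        Real.exp (∑ i, (x i * (p.1 * p.2 i) ^ 2 + y i * (p.1 * p.2 i))) := by
    refine (continuous_finset_sum _ fun j _ => ?_).mul hFc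
    exact ((continuous_const.mul continuous_fst).mul
        (((hcoord j).comp continuous_snd).pow 2)).add
      (continuous_const.mul ((hcoord j).comp continuous_snd))
  have hg : ∀ ρ : ℝ, HasDerivAt
      (fun ρ' => ∫ s in Metric.sphere (0 : EuclideanSpace ℝ (Fin (d+1))) 1,
        Real.exp (∑ i, (x i * (ρ' * s i) ^ 2 + y i * (ρ' * s i))) ∂μH[(d:ℝ)])
      (∫ s in Metric.sphere (0 : EuclideanSpace ℝ (Fin (d+1))) 1,
        (∑ i, (2 * x i * ρ * s i ^ 2 + y i * s i)) *
          Real.exp (∑ i, (x i * (ρ * s i) ^ 2 + y i * (ρ * s i))) ∂μH[(d:ℝ)]) ρ := by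
    intro ρ
    refine hasDerivAt_integral_sphere d hd one_pos
      (fun ρ' s => Real.exp (∑ i, (x i * (ρ' * s i) ^ 2 + y i * (ρ' * s i))))
      (fun ρ' s => (∑ i, (2 * x i * ρ' * s i ^ 2 + y i * s i)) *
        Real.exp (∑ i, (x i * (ρ' * s i) ^ 2 + y i * (ρ' * s i)))) hFc hF'c ?_ ρ
    intro ρ s
    have hsum : HasDerivAt (fun b => ∑ i, (x i * (b * s i) ^ 2 + y i * (b * s i)))
        (∑ i, (2 * x i * ρ * s i ^ 2 + y i * s i)) ρ := by
      refine HasDerivAt.fun_sum fun j _ => ?_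
      have hb : HasDerivAt (fun b : ℝ => b * s j) (s j) ρ := by
        simpa using (hasDerivAt_id ρ).mul_const (s j)
      have h := ((hb.pow 2).const_mul (x j)).add (hb.const_mul (y j))
      convert h using 1
      · rfl
      · norm_num
        ring
    simpa [mul_comm] using hsum.exp
  have hZd : HasDerivAt (fun ρ => Ztilde d x y ρ)
      ((d : ℝ) * r ^ (d-1) *
          (∫ s in Metric.sphere (0 : EuclideanSpace ℝ (Fin (d+1))) 1,
            Real.exp (∑ i, (x i * (r * s i) ^ 2 + y i * (r * s i))) ∂μH[(d:ℝ)]) +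
        r ^ d * ∫ s in Metric.sphere (0 : EuclideanSpace ℝ (Fin (d+1))) 1,
          (∑ i, (2 * x i * r * s i ^ 2 + y i * s i)) *
            Real.exp (∑ i, (x i * (r * s i) ^ 2 + y i * (r * s i))) ∂μH[(d:ℝ)]) r := by
    have h1 := (hasDerivAt_pow d r).mul (hg r)
    refine HasDerivAt.congr_of_eventuallyEq h1 ?_
    filter_upwards [eventually_gt_nhds hr] with ρ hρ
    exact Ztilde_eq_scaled d x y hρ
  have hkey : (∫ t in Metric.sphere (0 : EuclideanSpace ℝ (Fin (d+1))) r,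
      (∑ i, (2 * x i * t i ^ 2 + y i * t i)) * Real.exp (Bsum d x y t) ∂μH[(d:ℝ)]) =
      r ^ (d+1) * ∫ s in Metric.sphere (0 : EuclideanSpace ℝ (Fin (d+1))) 1,
        (∑ i, (2 * x i * r * s i ^ 2 + y i * s i)) *
          Real.exp (∑ i, (x i * (r * s i) ^ 2 + y i * (r * s i))) ∂μH[(d:ℝ)] := by
    rw [integral_sphere_smul d hr
      (fun t => (∑ i, (2 * x i * t i ^ 2 + y i * t i)) * Real.exp (Bsum d x y t))]
    have e3 : ∀ s : EuclideanSpace ℝ (Fin (d+1)),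
        (∑ i, (2 * x i * (r • s) i ^ 2 + y i * (r • s) i)) * Real.exp (Bsum d x y (r • s)) =
        r * ((∑ i, (2 * x i * r * s i ^ 2 + y i * s i)) *
          Real.exp (∑ i, (x i * (r * s i) ^ 2 + y i * (r * s i)))) := by
      intro s
      have hsm : ∀ j : Fin (d+1), (r • s) j = r * s j := fun j => rfl
      have hB : Bsum d x y (r • s) = ∑ i, (x i * (r * s i) ^ 2 + y i * (r * s i)) := by
        unfold Bsum
        exact Finset.sum_congr rfl fun j _ => by rw [hsm]
      have h2 : (∑ i, (2 * x i * (r • s) i ^ 2 + y i * (r • s) i)) =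
          r * ∑ i, (2 * x i * r * s i ^ 2 + y i * s i) := by
        rw [Finset.mul_sum]
        exact Finset.sum_congr rfl fun j _ => by rw [hsm]; ring
      rw [hB, h2]; ring
    rw [integral_congr_ae (Filter.Eventually.of_forall e3), integral_const_mul]
    ring
  have hZs : r ^ d * (∫ s in Metric.sphere (0 : EuclideanSpace ℝ (Fin (d+1))) 1,
      Real.exp (∑ i, (x i * (r * s i) ^ 2 + y i * (r * s i))) ∂μH[(d:ℝ)]) =
      Ztilde d x y r := (Ztilde_eq_scaled d x y hr).symm
  have hp1 : r * r ^ (d - 1) = r ^ d := by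
    rw [← pow_succ', Nat.sub_add_cancel hd]
  have hp2 : r * r ^ d = r ^ (d + 1) := (pow_succ' r d).symm
  rw [hZd.deriv, hRHS, hkey, ← hZs, ← hp2, ← hp1]
  ring
end
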